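/- arXiv:2210.15752 — 7 statements merged into one kernel-verified Lean document; each statement's English description precedes it below -/
import Mathlib

section
/- Let X ∈ ℝ^{d_X×T} with XX^⊤ invertible, Y ∈ ℝ^{d_Y×T}, ε > 0, c ≥ 0, and let Ξ = [ε^{1/2}(XX^⊤)^{-1/2}X ; Y] ∈ ℝ^{(d_X+d_Y)×T} be the row-concatenation. Let λ_1 ≥ λ_2 ≥ … ≥ λ_{d_X+d_Y} ≥ 0 be the eigenvalues of ΞΞ^⊤ (equivalently the squared singular values of Ξ), and let v_α ∈ ℝ^T be corresponding orthonormal right singular vectors of Ξ (orthonormal eigenvectors of Ξ^⊤Ξ for the nonzero λ_α). Consider the minimization of tr[(c+ε)Z^⊤Z − Z^⊤Z(εX^⊤(XX^⊤)^{-1}X + Y^⊤Y)] over Z ∈ ℝ^{d×T} subject to the Loewner constraint ZZ^⊤ ≼ I_d. Then for any set of orthonormal vectors {w_α}_{α=1}^{D} ⊂ ℝ^d with D = min(d, d_X+d_Y), the matrix Ẑ = Σ_{α=1}^{D} w_α 𝟙(λ_α > c+ε) v_α^⊤ attains the minimum. -/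
open Matrix Finset

section AuxCCPC

variable {m n p q : Type*} [Fintype m] [Fintype n] [Fintype p] [Fintype q]

lemma dotSelfNonneg (x : n → ℝ) : 0 ≤ x ⬝ᵥ x :=
  Finset.sum_nonneg fun i _ => mul_self_nonneg _

lemma starTriv (x : n → ℝ) : star x = x := funext fun _ => star_trivial _

lemma traceMulVecMulVec (A : Matrix n n ℝ) (x y : n → ℝ) :
    trace (A * vecMulVec x y) = y ⬝ᵥ (A *ᵥ x) := by
  simp only [trace, diag_apply, mul_apply, dotProduct, mulVec, Finset.mul_sum]
  refine Finset.sum_congr rfl fun i _ => Finset.sum_congr rfl fun j _ => ?_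
  rw [vecMulVec_apply]; ring

lemma traceVecMulVec (x y : n → ℝ) : trace (vecMulVec x y) = x ⬝ᵥ y := by
  simp [trace, diag_apply, vecMulVec_apply, dotProduct]

lemma vmvTranspose (a : m → ℝ) (b : n → ℝ) : (vecMulVec a b)ᵀ = vecMulVec b a := by
  ext i j; simp [vecMulVec_apply, mul_comm]

lemma vmvMul (a : m → ℝ) (b c : n → ℝ) (e : p → ℝ) :
    vecMulVec a b * vecMulVec c e = (b ⬝ᵥ c) • vecMulVec a e := by
  ext i j
  simp only [mul_apply, vecMulVec_apply, Matrix.smul_apply, smul_eq_mul, dotProduct, Finset.sum_mul]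
  exact Finset.sum_congr rfl fun k _ => by ring

lemma vmvMulVec (a : m → ℝ) (b x : n → ℝ) :
    vecMulVec a b *ᵥ x = (b ⬝ᵥ x) • a := by
  ext i
  simp only [mulVec, vecMulVec_apply, dotProduct, Pi.smul_apply, smul_eq_mul, Finset.sum_mul]
  exact Finset.sum_congr rfl fun k _ => by ring

lemma sumMulVec {ι : Type*} (s : Finset ι) (f : ι → Matrix m n ℝ) (x : n → ℝ) :
    (∑ i ∈ s, f i) *ᵥ x = ∑ i ∈ s, f i *ᵥ x := by
  ext j
  simp only [mulVec, dotProduct, Matrix.sum_apply, Finset.sum_apply, Finset.sum_mul]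
  rw [Finset.sum_comm]

lemma dotSum {ι : Type*} (s : Finset ι) (x : n → ℝ) (f : ι → n → ℝ) :
    x ⬝ᵥ (∑ i ∈ s, f i) = ∑ i ∈ s, x ⬝ᵥ f i := by
  simp only [dotProduct, Finset.sum_apply, Finset.mul_sum]
  rw [Finset.sum_comm]

lemma dotTransposeMulVec (A : Matrix m n ℝ) (x : n → ℝ) (y : m → ℝ) :
    x ⬝ᵥ (Aᵀ *ᵥ y) = (A *ᵥ x) ⬝ᵥ y := by
  rw [dotProduct_mulVec, vecMul_transpose]

lemma dotMulVec' (A : Matrix m n ℝ) (x : m → ℝ) (y : n → ℝ) :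
    x ⬝ᵥ (A *ᵥ y) = (Aᵀ *ᵥ x) ⬝ᵥ y := by
  conv_lhs => rw [← transpose_transpose A]
  rw [dotTransposeMulVec]

lemma dotSqLe (x y : n → ℝ) : (x ⬝ᵥ y) * (x ⬝ᵥ y) ≤ (x ⬝ᵥ x) * (y ⬝ᵥ y) := by
  have h := Finset.sum_mul_sq_le_sq_mul_sq Finset.univ x y
  simp only [pow_two] at h
  simpa [dotProduct] using h

lemma psdOfIdem {Q : Matrix n n ℝ} (hsym : Qᵀ = Q) (hidem : Q * Q = Q) : Q.PosSemidef := by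
  refine PosSemidef.of_dotProduct_mulVec_nonneg ?_ ?_
  · rw [IsHermitian, conjTranspose_eq_transpose_of_trivial, hsym]
  · intro x
    rw [starTriv]
    have h1 : Q *ᵥ x = Q *ᵥ (Q *ᵥ x) := by rw [mulVec_mulVec, hidem]
    have h2 : x ⬝ᵥ (Q *ᵥ (Q *ᵥ x)) = (Q *ᵥ x) ⬝ᵥ (Q *ᵥ x) := by
      rw [dotMulVec', hsym]
    calc (0:ℝ) ≤ (Q *ᵥ x) ⬝ᵥ (Q *ᵥ x) := dotSelfNonneg _
    _ = x ⬝ᵥ (Q *ᵥ x) := by rw [← h2, ← h1]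

lemma psdTraceNonneg {A : Matrix n n ℝ} [DecidableEq n] (hA : A.PosSemidef) : 0 ≤ trace A := by
  refine Finset.sum_nonneg fun i _ => ?_
  have h := hA.dotProduct_mulVec_nonneg (Pi.single i 1)
  rw [starTriv] at h
  simpa [diag_apply, mulVec, dotProduct, Pi.single_apply] using h

lemma traceMulPsdNonneg {A B : Matrix n n ℝ} [DecidableEq n]
    (hA : A.PosSemidef) (hB : B.PosSemidef) : 0 ≤ trace (A * B) := by
  open scoped MatrixOrder in
  obtain ⟨C, rfl⟩ := CStarAlgebra.nonneg_iff_eq_star_mul_self.mp hB.nonneg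
  rw [← Matrix.mul_assoc, trace_mul_comm, ← Matrix.mul_assoc]
  exact psdTraceNonneg (hA.mul_mul_conjTranspose_same C)

/-- collapse a product of two sums of outer products with orthonormal middle vectors -/
lemma collapseSum {k : Type*} [Fintype k] [DecidableEq k]
    (g : k → m → ℝ) (mid : k → q → ℝ) (f : k → p → ℝ) (c : k → ℝ)
    (hmid : ∀ α β, mid α ⬝ᵥ mid β = if α = β then (1:ℝ) else 0) :
    (∑ α, c α • vecMulVec (g α) (mid α)) * (∑ β, c β • vecMulVec (mid β) (f β))
      = ∑ α, (c α * c α) • vecMulVec (g α) (f α) := by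
  rw [Matrix.sum_mul]
  refine Finset.sum_congr rfl fun α _ => ?_
  rw [Matrix.mul_sum, Finset.sum_eq_single α]
  · rw [Matrix.smul_mul, Matrix.mul_smul, vmvMul, hmid, if_pos rfl, one_smul, smul_smul]
  · intro b _ hb
    rw [Matrix.smul_mul, Matrix.mul_smul, vmvMul, hmid, if_neg (fun h => hb h.symm)]
    simp
  · intro h; exact absurd (Finset.mem_univ α) h

/-- `1 - ∑ wᵅ wᵅᵀ` is PSD for an orthonormal family `w`. -/
lemma projCompPsd {k : Type*} [Fintype k] [DecidableEq k] [DecidableEq n] (w : k → n → ℝ)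
    (hw : ∀ α β, w α ⬝ᵥ w β = if α = β then (1:ℝ) else 0) :
    ((1 : Matrix n n ℝ) - ∑ α, vecMulVec (w α) (w α)).PosSemidef := by
  set Q : Matrix n n ℝ := ∑ α, vecMulVec (w α) (w α) with hQ
  have hQsym : Qᵀ = Q := by
    rw [hQ, transpose_sum]
    exact Finset.sum_congr rfl fun α _ => vmvTranspose _ _
  have hQQ : Q * Q = Q := by
    have h := collapseSum w w w (fun _ => (1:ℝ)) hw
    simpa using h
  refine psdOfIdem ?_ ?_
  · rw [transpose_sub, transpose_one, hQsym]
  · show (1 - Q) * (1 - Q) = 1 - Q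
    rw [Matrix.sub_mul, Matrix.mul_sub, Matrix.mul_sub]
    simp only [Matrix.one_mul, Matrix.mul_one, hQQ]
    abel

/-- Bessel inequality for orthonormal families. -/
lemma besselIneq {k : Type*} [Fintype k] [DecidableEq k] [DecidableEq n] (w : k → n → ℝ)
    (hw : ∀ α β, w α ⬝ᵥ w β = if α = β then (1:ℝ) else 0) (x : n → ℝ) :
    ∑ α, (w α ⬝ᵥ x) * (w α ⬝ᵥ x) ≤ x ⬝ᵥ x := by
  have h := (projCompPsd w hw).dotProduct_mulVec_nonneg x
  rw [starTriv, sub_mulVec, one_mulVec, dotProduct_sub, sumMulVec] at h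
  have he : x ⬝ᵥ (∑ α, vecMulVec (w α) (w α) *ᵥ x) = ∑ α, (w α ⬝ᵥ x) * (w α ⬝ᵥ x) := by
    rw [dotSum]
    refine Finset.sum_congr rfl fun α _ => ?_
    rw [vmvMulVec, dotProduct_smul, smul_eq_mul, dotProduct_comm]
  rw [he] at h
  linarith

end AuxCCPC

lemma sumFinCastLE {n D : ℕ} (hDn : D ≤ n) (f : Fin n → ℝ) :
    ∑ α : Fin D, f (Fin.castLE hDn α) = ∑ β : Fin n, (if (β : ℕ) < D then f β else 0) := by
  classical
  set g : ℕ → ℝ := fun i => if h : i < n then (if i < D then f ⟨i, h⟩ else 0) else 0 with hg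
  have hg1 : ∑ α : Fin D, f (Fin.castLE hDn α) = ∑ i ∈ Finset.range D, g i := by
    rw [← Fin.sum_univ_eq_sum_range]
    refine Finset.sum_congr rfl fun α _ => ?_
    have hα : (α : ℕ) < n := lt_of_lt_of_le α.isLt hDn
    simp only [hg, dif_pos hα, if_pos α.isLt]
    rfl
  have hg2 : ∑ β : Fin n, (if (β : ℕ) < D then f β else 0) = ∑ i ∈ Finset.range n, g i := by
    rw [← Fin.sum_univ_eq_sum_range]
    refine Finset.sum_congr rfl fun β _ => ?_
    simp only [hg, dif_pos β.isLt, Fin.eta]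
  rw [hg1, hg2]
  refine Finset.sum_subset (Finset.range_subset_range.mpr hDn) fun i _ hiD => ?_
  have h1 : ¬ i < D := by simpa using hiD
  simp only [hg]
  split_ifs
  · rfl
  · rfl

lemma auxBudget (d n : ℕ) (m : Fin n → ℝ) (hm : Monotone m) (hm0 : ∀ β, m β ≤ 0)
    (a : Fin n → ℝ) (ha0 : ∀ β, 0 ≤ a β) (ha1 : ∀ β, a β ≤ 1)
    (hsum : ∑ β, a β ≤ (d : ℝ)) :
    ∑ α : Fin (min d n), m (Fin.castLE (min_le_right d n) α) ≤ ∑ β, m β * a β := by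
  classical
  set D := min d n with hD
  have hDn : D ≤ n := min_le_right d n
  set mstar : ℝ := if h : d < n then m ⟨d, h⟩ else 0 with hmstar
  have hmstar0 : mstar ≤ 0 := by
    rw [hmstar]; split_ifs with h
    exacts [hm0 _, le_rfl]
  have hmle : ∀ β : Fin n, (β : ℕ) < D → m β ≤ mstar := by
    intro β hβ; rw [hmstar]; split_ifs with h
    · exact hm (show β ≤ ⟨d, h⟩ from by simp only [Fin.le_def]; omega)
    · exact hm0 β
  have hmge : ∀ β : Fin n, ¬ (β : ℕ) < D → mstar ≤ m β := by
    intro β hβ; rw [hmstar]; split_ifs with h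
    · refine hm (show (⟨d, h⟩ : Fin n) ≤ β from by simp only [Fin.le_def]; omega)
    · exact absurd β.isLt (by omega)
  have hcount : ∑ β : Fin n, (if (β : ℕ) < D then (1:ℝ) else 0) = (D : ℝ) := by
    rw [← sumFinCastLE hDn (fun _ => (1:ℝ))]
    simp
  have hsumD : ∑ β, a β ≤ (D : ℝ) := by
    have hn' : ∑ β, a β ≤ (n : ℝ) := by
      calc ∑ β, a β ≤ ∑ _β : Fin n, (1:ℝ) := Finset.sum_le_sum fun β _ => ha1 β
      _ = (n : ℝ) := by simp
    rw [hD]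
    push_cast [Nat.cast_min]
    exact le_min hsum hn'
  have hpt : ∀ β : Fin n,
      mstar * (a β - (if (β : ℕ) < D then (1:ℝ) else 0))
        ≤ m β * (a β - (if (β : ℕ) < D then (1:ℝ) else 0)) := by
    intro β
    by_cases hβ : (β : ℕ) < D
    · simp only [if_pos hβ]
      have h1 := hmle β hβ
      have h2 := ha1 β
      nlinarith
    · simp only [if_neg hβ]
      have h1 := hmge β hβ
      have h2 := ha0 β
      nlinarith
  have h1 : ∑ β, mstar * (a β - (if (β : ℕ) < D then (1:ℝ) else 0))
      ≤ ∑ β, m β * (a β - (if (β : ℕ) < D then (1:ℝ) else 0)) :=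
    Finset.sum_le_sum fun β _ => hpt β
  have h2 : ∑ β, mstar * (a β - (if (β : ℕ) < D then (1:ℝ) else 0))
      = mstar * ((∑ β, a β) - (D : ℝ)) := by
    rw [← Finset.mul_sum, Finset.sum_sub_distrib, hcount]
  have h3 : 0 ≤ mstar * ((∑ β, a β) - (D : ℝ)) := by nlinarith [hmstar0, hsumD]
  have h4 : ∑ β, m β * (a β - (if (β : ℕ) < D then (1:ℝ) else 0))
      = (∑ β, m β * a β) - ∑ β : Fin n, (if (β : ℕ) < D then m β else 0) := by
    rw [← Finset.sum_sub_distrib]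
    refine Finset.sum_congr rfl fun β _ => ?_
    split_ifs <;> ring
  rw [sumFinCastLE hDn m]
  rw [h2] at h1
  rw [h4] at h1
  linarith

/-- **Thresholded-SVD solution of the covariance-constrained predictive-coding objective.**
Let `X ∈ ℝ^{dX×T}` with `XXᵀ` invertible, `Y ∈ ℝ^{dY×T}`, `ε > 0`, `c ≥ 0`, and let
`Ξ = [√ε (XXᵀ)^{-1/2} X ; Y]` (row concatenation), with singular value decomposition
`Ξ = ∑ α, √(λ α) • u α (v α)ᵀ` where `u`, `v` are orthonormal families and the `λ α`
(the eigenvalues of `ΞΞᵀ`) are nonincreasing and nonnegative.  Then for any orthonormal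
family `w` of `min d (dX + dY)` vectors in `ℝ^d`, the matrix
`Ẑ = ∑ α, 𝟙(λ α > c + ε) • w α (v α)ᵀ` attains the minimum of
`tr[(c+ε) ZᵀZ − ZᵀZ (ε Xᵀ(XXᵀ)⁻¹X + YᵀY)]` over all `Z` with `Z Zᵀ ≼ I` (Loewner order). -/
theorem ccpc_thresholded_svd_attains_min
    (dX dY d T : ℕ) (X : Matrix (Fin dX) (Fin T) ℝ) (Y : Matrix (Fin dY) (Fin T) ℝ)
    (ε c : ℝ) (hε : 0 < ε) (hc : 0 ≤ c)
    (hX : IsUnit (X * Xᵀ).det)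
    -- `S` is the positive-semidefinite square root of `XXᵀ`, so `S⁻¹ = (XXᵀ)^{-1/2}`
    (S : Matrix (Fin dX) (Fin dX) ℝ) (hS : S.PosSemidef) (hSsq : S * S = X * Xᵀ)
    -- singular value data of the concatenated whitened matrix `Ξ = [√ε S⁻¹ X ; Y]`
    (lam : Fin (dX + dY) → ℝ)
    (u : Fin (dX + dY) → (Fin dX ⊕ Fin dY) → ℝ)
    (v : Fin (dX + dY) → Fin T → ℝ)
    (hlam_anti : Antitone lam) (hlam_nonneg : ∀ α, 0 ≤ lam α)
    (hu : ∀ α β, u α ⬝ᵥ u β = if α = β then (1 : ℝ) else 0)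
    (hv : ∀ α β, v α ⬝ᵥ v β = if α = β then (1 : ℝ) else 0)
    (hSVD : fromRows (Real.sqrt ε • (S⁻¹ * X)) Y
      = ∑ α : Fin (dX + dY), Real.sqrt (lam α) • vecMulVec (u α) (v α))
    -- an arbitrary orthonormal family `w` of `D = min d (dX + dY)` vectors in `ℝ^d`
    (w : Fin (min d (dX + dY)) → Fin d → ℝ)
    (hw : ∀ α β, w α ⬝ᵥ w β = if α = β then (1 : ℝ) else 0)
    -- the thresholded-SVD candidate `Ẑ`
    (Zhat : Matrix (Fin d) (Fin T) ℝ)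
    (hZhat : Zhat = ∑ α : Fin (min d (dX + dY)),
      (if c + ε < lam (Fin.castLE (min_le_right d (dX + dY)) α) then (1 : ℝ) else 0) •
        vecMulVec (w α) (v (Fin.castLE (min_le_right d (dX + dY)) α))) :
    -- `Ẑ` is feasible and minimizes the objective among all feasible `Z`
    ((1 : Matrix (Fin d) (Fin d) ℝ) - Zhat * Zhatᵀ).PosSemidef ∧
    ∀ Z : Matrix (Fin d) (Fin T) ℝ,
      ((1 : Matrix (Fin d) (Fin d) ℝ) - Z * Zᵀ).PosSemidef →
      Matrix.trace ((c + ε) • (Zhatᵀ * Zhat)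
          - Zhatᵀ * Zhat * (ε • (Xᵀ * (X * Xᵀ)⁻¹ * X) + Yᵀ * Y))
        ≤ Matrix.trace ((c + ε) • (Zᵀ * Z)
          - Zᵀ * Z * (ε • (Xᵀ * (X * Xᵀ)⁻¹ * X) + Yᵀ * Y)) := by
  classical
  set t : ℝ := c + ε with ht_def
  have ht : 0 < t := by rw [ht_def]; linarith
  set M : Matrix (Fin T) (Fin T) ℝ := ε • (Xᵀ * (X * Xᵀ)⁻¹ * X) + Yᵀ * Y with hM_def
  set κ : Fin (min d (dX + dY)) → Fin (dX + dY) :=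
    Fin.castLE (min_le_right d (dX + dY)) with hκ
  -- symmetry of S
  have hSsym : Sᵀ = S := by
    have h := hS.1
    rwa [IsHermitian, conjTranspose_eq_transpose_of_trivial] at h
  -- M = Ξᵀ Ξ
  have hXi : (fromRows (Real.sqrt ε • (S⁻¹ * X)) Y)ᵀ * (fromRows (Real.sqrt ε • (S⁻¹ * X)) Y)
      = M := by
    rw [transpose_fromRows, fromCols_mul_fromRows, hM_def]
    congr 1
    rw [transpose_smul, Matrix.smul_mul, Matrix.mul_smul, smul_smul,
      Real.mul_self_sqrt hε.le]
    congr 1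
    rw [transpose_mul, transpose_nonsing_inv, hSsym, ← hSsq, Matrix.mul_inv_rev]
    simp only [Matrix.mul_assoc]
  -- spectral decomposition of M
  have hM : M = ∑ β : Fin (dX + dY), lam β • vecMulVec (v β) (v β) := by
    rw [← hXi, hSVD, transpose_sum]
    simp only [transpose_smul, vmvTranspose]
    rw [collapseSum (fun α => v α) u (fun α => v α) (fun α => Real.sqrt (lam α)) hu]
    exact Finset.sum_congr rfl fun β _ => by rw [Real.mul_self_sqrt (hlam_nonneg β)]
  have hMv : ∀ β, M *ᵥ v β = lam β • v β := by
    intro β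
    rw [hM, sumMulVec, Finset.sum_eq_single β]
    · rw [smul_mulVec, vmvMulVec, hv, if_pos rfl, one_smul]
    · intro b _ hb
      rw [smul_mulVec, vmvMulVec, hv, if_neg hb]
      simp
    · intro h; exact absurd (Finset.mem_univ β) h
  -- objective value formula
  have hobj : ∀ Z : Matrix (Fin d) (Fin T) ℝ,
      trace (t • (Zᵀ * Z) - Zᵀ * Z * M)
        = t * trace (Zᵀ * Z) - ∑ β, lam β * ((Z *ᵥ v β) ⬝ᵥ (Z *ᵥ v β)) := by
    intro Z
    rw [trace_sub, trace_smul, smul_eq_mul]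
    congr 1
    rw [hM, Matrix.mul_sum, trace_sum]
    refine Finset.sum_congr rfl fun β _ => ?_
    rw [Matrix.mul_smul, trace_smul, smul_eq_mul, traceMulVecMulVec]
    congr 1
    rw [← mulVec_mulVec, dotTransposeMulVec]
  -- orthonormality of v ∘ κ
  have hvκ : ∀ α β, v (κ α) ⬝ᵥ v (κ β) = if α = β then (1:ℝ) else 0 := by
    intro α β
    rw [hv]
    by_cases h : α = β
    · simp [h]
    · rw [if_neg h, if_neg (fun hh => h (Fin.castLE_injective _ hh))]
  -- Zhat structure
  have hZhatT : Zhatᵀ = ∑ α, (if t < lam (κ α) then (1:ℝ) else 0) •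
      vecMulVec (v (κ α)) (w α) := by
    rw [hZhat, transpose_sum]
    simp only [transpose_smul, vmvTranspose]
  have hZZt : Zhat * Zhatᵀ = ∑ α, (if t < lam (κ α) then (1:ℝ) else 0) •
      vecMulVec (w α) (w α) := by
    rw [hZhatT, hZhat,
      collapseSum w (fun α => v (κ α)) w (fun α => if t < lam (κ α) then (1:ℝ) else 0) hvκ]
    refine Finset.sum_congr rfl fun α _ => ?_
    congr 1
    split_ifs <;> ring
  have hZtZ : Zhatᵀ * Zhat = ∑ α, (if t < lam (κ α) then (1:ℝ) else 0) •
      vecMulVec (v (κ α)) (v (κ α)) := by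
    rw [hZhatT, hZhat,
      collapseSum (fun α => v (κ α)) w (fun α => v (κ α))
        (fun α => if t < lam (κ α) then (1:ℝ) else 0) hw]
    refine Finset.sum_congr rfl fun α _ => ?_
    congr 1
    split_ifs <;> ring
  constructor
  · -- feasibility of Zhat
    refine PosSemidef.of_dotProduct_mulVec_nonneg ?_ ?_
    · rw [IsHermitian, conjTranspose_eq_transpose_of_trivial, transpose_sub, transpose_one,
        transpose_mul, transpose_transpose]
    · intro x
      rw [starTriv, sub_mulVec, one_mulVec, dotProduct_sub, hZZt, sumMulVec, dotSum]
      have hterm : ∀ α, x ⬝ᵥ (((if t < lam (κ α) then (1:ℝ) else 0) •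
          vecMulVec (w α) (w α)) *ᵥ x) ≤ (w α ⬝ᵥ x) * (w α ⬝ᵥ x) := by
        intro α
        rw [smul_mulVec, vmvMulVec, dotProduct_smul, dotProduct_smul, smul_eq_mul,
          smul_eq_mul, dotProduct_comm]
        split_ifs
        · rw [one_mul]
        · rw [zero_mul]
          exact mul_self_nonneg _
      have hb := besselIneq w hw x
      have hs := Finset.sum_le_sum (s := Finset.univ) (fun α _ => hterm α)
      linarith
  · -- optimality
    intro Z feasZ
    have hpsdZtZ : (Zᵀ * Z).PosSemidef := by
      have h := posSemidef_conjTranspose_mul_self Z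
      rwa [conjTranspose_eq_transpose_of_trivial] at h
    have ha0 : ∀ β, 0 ≤ (Z *ᵥ v β) ⬝ᵥ (Z *ᵥ v β) := fun β => dotSelfNonneg _
    have hop : ∀ z : Fin d → ℝ, (Zᵀ *ᵥ z) ⬝ᵥ (Zᵀ *ᵥ z) ≤ z ⬝ᵥ z := by
      intro z
      have h := feasZ.dotProduct_mulVec_nonneg z
      rw [starTriv, sub_mulVec, one_mulVec, dotProduct_sub] at h
      have h2 : z ⬝ᵥ ((Z * Zᵀ) *ᵥ z) = (Zᵀ *ᵥ z) ⬝ᵥ (Zᵀ *ᵥ z) := by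
        rw [← mulVec_mulVec, dotMulVec']
      linarith
    have ha1 : ∀ β, (Z *ᵥ v β) ⬝ᵥ (Z *ᵥ v β) ≤ 1 := by
      intro β
      set y := Z *ᵥ v β with hy
      have hyy : 0 ≤ y ⬝ᵥ y := dotSelfNonneg y
      have h1 : y ⬝ᵥ y = v β ⬝ᵥ (Zᵀ *ᵥ y) := (dotTransposeMulVec Z (v β) y).symm
      have hcs := dotSqLe (v β) (Zᵀ *ᵥ y)
      rw [hv, if_pos rfl, one_mul] at hcs
      have h3 := hop y
      have h4 := dotSelfNonneg (Zᵀ *ᵥ y)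
      nlinarith [h1, hcs, h3, hyy, h4]
    have hsum : ∑ β, (Z *ᵥ v β) ⬝ᵥ (Z *ᵥ v β) ≤ trace (Zᵀ * Z) := by
      have hPv := projCompPsd v hv
      have h0 := traceMulPsdNonneg hpsdZtZ hPv
      rw [Matrix.mul_sub, Matrix.mul_one, trace_sub] at h0
      have htr2 : trace (Zᵀ * Z * ∑ β, vecMulVec (v β) (v β))
          = ∑ β, (Z *ᵥ v β) ⬝ᵥ (Z *ᵥ v β) := by
        rw [Matrix.mul_sum, trace_sum]
        refine Finset.sum_congr rfl fun β _ => ?_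
        rw [traceMulVecMulVec, ← mulVec_mulVec, dotTransposeMulVec]
      rw [htr2] at h0
      linarith
    have htrd : trace (Zᵀ * Z) ≤ (d : ℝ) := by
      have h0 := psdTraceNonneg feasZ
      rw [trace_sub, trace_one] at h0
      have hcomm : trace (Zᵀ * Z) = trace (Z * Zᵀ) := trace_mul_comm _ _
      simp only [Fintype.card_fin] at h0
      linarith
    -- value of the objective at Zhat
    have hfhat : trace (t • (Zhatᵀ * Zhat) - Zhatᵀ * Zhat * M)
        = ∑ α : Fin (min d (dX + dY)), min (t - lam (κ α)) 0 := by
      rw [trace_sub, trace_smul, smul_eq_mul]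
      have h1 : trace (Zhatᵀ * Zhat) = ∑ α, (if t < lam (κ α) then (1:ℝ) else 0) := by
        rw [hZtZ, trace_sum]
        refine Finset.sum_congr rfl fun α _ => ?_
        rw [trace_smul, traceVecMulVec, hv, if_pos rfl, smul_eq_mul, mul_one]
      have h2 : trace (Zhatᵀ * Zhat * M)
          = ∑ α, (if t < lam (κ α) then (1:ℝ) else 0) * lam (κ α) := by
        rw [hZtZ, Matrix.sum_mul, trace_sum]
        refine Finset.sum_congr rfl fun α _ => ?_
        rw [Matrix.smul_mul, trace_smul, smul_eq_mul, trace_mul_comm, traceMulVecMulVec,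
          hMv, dotProduct_smul, smul_eq_mul, hv, if_pos rfl, mul_one]
      rw [h1, h2, Finset.mul_sum, ← Finset.sum_sub_distrib]
      refine Finset.sum_congr rfl fun α _ => ?_
      by_cases h : t < lam (κ α)
      · rw [if_pos h, mul_one, one_mul]
        exact (min_eq_left (by linarith)).symm
      · rw [if_neg h, mul_zero, zero_mul, sub_zero]
        exact (min_eq_right (by push_neg at h; linarith)).symm
    rw [hfhat, hobj Z]
    have hmono : Monotone (fun β : Fin (dX + dY) => min (t - lam β) 0) := by
      intro β γ hβγ
      exact min_le_min (by have := hlam_anti hβγ; linarith) le_rfl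
    have hm0 : ∀ β : Fin (dX + dY), min (t - lam β) 0 ≤ 0 := fun β => min_le_right _ _
    have hkey := auxBudget d (dX + dY) (fun β => min (t - lam β) 0) hmono hm0
      (fun β => (Z *ᵥ v β) ⬝ᵥ (Z *ᵥ v β)) ha0 ha1 (le_trans hsum htrd)
    rw [← hκ] at hkey
    have h5 : ∑ β, min (t - lam β) 0 * ((Z *ᵥ v β) ⬝ᵥ (Z *ᵥ v β))
        ≤ ∑ β, (t - lam β) * ((Z *ᵥ v β) ⬝ᵥ (Z *ᵥ v β)) :=
      Finset.sum_le_sum fun β _ => mul_le_mul_of_nonneg_right (min_le_left _ _) (ha0 β)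
    have h6 : ∑ β, (t - lam β) * ((Z *ᵥ v β) ⬝ᵥ (Z *ᵥ v β))
        = t * (∑ β, (Z *ᵥ v β) ⬝ᵥ (Z *ᵥ v β))
          - ∑ β, lam β * ((Z *ᵥ v β) ⬝ᵥ (Z *ᵥ v β)) := by
      rw [Finset.mul_sum, ← Finset.sum_sub_distrib]
      exact Finset.sum_congr rfl fun β _ => by ring
    have h7 : t * (∑ β, (Z *ᵥ v β) ⬝ᵥ (Z *ᵥ v β)) ≤ t * trace (Zᵀ * Z) :=
      mul_le_mul_of_nonneg_left hsum ht.le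
    linarith
end

section
/- Let X ∈ ℝ^{d_X×T} with XX^⊤ invertible, Y ∈ ℝ^{d_Y×T}, ε > 0, c ≥ 0, and let Ξ = [ε^{1/2}(XX^⊤)^{-1/2}X ; Y] ∈ ℝ^{(d_X+d_Y)×T}. Let λ_1 ≥ … ≥ λ_{d_X+d_Y} ≥ 0 be the eigenvalues of ΞΞ^⊤. Then the minimum value of tr[(c+ε)Z^⊤Z − Z^⊤Z(εX^⊤(XX^⊤)^{-1}X + Y^⊤Y)] over Z ∈ ℝ^{d×T} with ZZ^⊤ ≼ I_d equals −Σ_{α=1}^{min(d, d_X+d_Y)} max(λ_α − c − ε, 0). -/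
open Matrix Finset

lemma trace_mul_vecMulVec {n : Type*} [Fintype n]
    (A : Matrix n n ℝ) (x y : n → ℝ) :
    Matrix.trace (A * vecMulVec x y) = y ⬝ᵥ (A *ᵥ x) := by
  simp only [Matrix.trace, Matrix.diag, Matrix.mul_apply, vecMulVec_apply, dotProduct, mulVec]
  exact Finset.sum_congr rfl fun i _ => by
    rw [Finset.mul_sum]; exact Finset.sum_congr rfl fun k _ => by ring

lemma vecMulVec_mul_vecMulVec {n m p : Type*} [Fintype m]
    (a : n → ℝ) (b c : m → ℝ) (d : p → ℝ) :
    vecMulVec a b * vecMulVec c d = (b ⬝ᵥ c) • vecMulVec a d := by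
  ext i j
  simp only [Matrix.mul_apply, vecMulVec_apply, Matrix.smul_apply, dotProduct, smul_eq_mul,
    Finset.sum_mul]
  exact Finset.sum_congr rfl fun k _ => by ring

lemma transpose_vecMulVec' {n m : Type*} (a : n → ℝ) (b : m → ℝ) :
    (vecMulVec a b)ᵀ = vecMulVec b a := by
  ext i j; simp [vecMulVec_apply, mul_comm]

lemma trace_transpose_mul_self_nonneg {n m : Type*} [Fintype n] [Fintype m]
    (A : Matrix n m ℝ) : 0 ≤ Matrix.trace (Aᵀ * A) := by
  simp only [Matrix.trace, Matrix.diag, Matrix.mul_apply, transpose_apply]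
  exact Finset.sum_nonneg fun j _ => Finset.sum_nonneg fun i _ => mul_self_nonneg _

lemma posSemidef_diag_nonneg' {n : Type*} [Fintype n] [DecidableEq n]
    {M : Matrix n n ℝ} (h : M.PosSemidef) (i : n) : 0 ≤ M i i := by
  have := h.dotProduct_mulVec_nonneg (Pi.single i 1)
  simpa [mulVec, dotProduct, Pi.single_apply, mul_ite, ite_mul] using this

lemma key_sum (N m : ℕ) (hmN : m ≤ N) (a t : ℕ → ℝ)
    (ha : Monotone a) (ht0 : ∀ i, 0 ≤ t i) (ht1 : ∀ i, t i ≤ 1)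
    (hbud : (∑ i ∈ Finset.range N, t i) ≤ (m : ℝ) ∨ m = N) :
    ∑ i ∈ Finset.range m, min (a i) 0 ≤ ∑ i ∈ Finset.range N, a i * t i := by
  set b : ℕ → ℝ := fun i => min (a i) 0 with hb
  have hb_mono : Monotone b := fun i j hij => min_le_min (ha hij) le_rfl
  have hb_nonpos : ∀ i, b i ≤ 0 := fun i => min_le_right _ _
  have hbt : ∑ i ∈ Finset.range N, b i * t i ≤ ∑ i ∈ Finset.range N, a i * t i :=
    Finset.sum_le_sum fun i _ => mul_le_mul_of_nonneg_right (min_le_left _ _) (ht0 i)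
  refine le_trans ?_ hbt
  rcases hbud with hbud | rfl
  · rcases Nat.eq_zero_or_pos m with rfl | hm
    · simp only [Finset.range_zero, Finset.sum_empty]
      have hz : ∀ i ∈ Finset.range N, t i = 0 := by
        intro i hi
        have h1 : t i ≤ ∑ j ∈ Finset.range N, t j :=
          Finset.single_le_sum (fun j _ => ht0 j) hi
        have := ht0 i
        simp only [Nat.cast_zero] at hbud
        linarith
      rw [Finset.sum_congr rfl fun i hi => by rw [hz i hi, mul_zero]]
      simp
    · set A := b (m - 1) with hA
      have hA_nonpos : A ≤ 0 := hb_nonpos _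
      have hsplit : ∑ i ∈ Finset.range N, b i * t i
          = ∑ i ∈ Finset.range m, b i * t i + ∑ i ∈ Finset.Ico m N, b i * t i := by
        rw [Finset.range_eq_Ico, ← Finset.sum_Ico_consecutive _ (Nat.zero_le m) hmN,
          Finset.range_eq_Ico]
      have h1 : ∑ i ∈ Finset.range m, b i
          ≤ ∑ i ∈ Finset.range m, (b i * t i + A * (1 - t i)) := by
        refine Finset.sum_le_sum fun i hi => ?_
        have hiA : b i ≤ A := hb_mono (Nat.le_sub_one_of_lt (Finset.mem_range.mp hi))
        nlinarith [ht0 i, ht1 i]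
      have h2 : ∑ i ∈ Finset.Ico m N, A * t i ≤ ∑ i ∈ Finset.Ico m N, b i * t i := by
        refine Finset.sum_le_sum fun i hi => ?_
        have hiA : A ≤ b i := hb_mono (le_trans (Nat.sub_le m 1) (Finset.mem_Ico.mp hi).1)
        exact mul_le_mul_of_nonneg_right hiA (ht0 i)
      have hsum1 : ∑ i ∈ Finset.range m, (b i * t i + A * (1 - t i))
          = ∑ i ∈ Finset.range m, b i * t i + (A * m - A * ∑ i ∈ Finset.range m, t i) := by
        rw [Finset.sum_add_distrib]
        congr 1
        rw [← Finset.mul_sum, Finset.sum_sub_distrib, Finset.sum_const, Finset.card_range]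
        ring
      have hbudsplit : ∑ i ∈ Finset.range m, t i + ∑ i ∈ Finset.Ico m N, t i ≤ (m : ℝ) := by
        rw [Finset.range_eq_Ico, Finset.sum_Ico_consecutive _ (Nat.zero_le m) hmN]
        rw [Finset.range_eq_Ico] at hbud; exact hbud
      have h3 : A * (m - (∑ i ∈ Finset.range m, t i + ∑ i ∈ Finset.Ico m N, t i)) ≤ 0 :=
        mul_nonpos_of_nonpos_of_nonneg hA_nonpos (by linarith)
      have h4 : A * ∑ i ∈ Finset.Ico m N, t i ≤ ∑ i ∈ Finset.Ico m N, b i * t i := by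
        rw [Finset.mul_sum]; exact h2
      calc ∑ i ∈ Finset.range m, b i
          ≤ ∑ i ∈ Finset.range m, b i * t i + (A * m - A * ∑ i ∈ Finset.range m, t i) := by
            rw [← hsum1]; exact h1
        _ ≤ ∑ i ∈ Finset.range m, b i * t i + A * ∑ i ∈ Finset.Ico m N, t i := by nlinarith
        _ ≤ ∑ i ∈ Finset.range m, b i * t i + ∑ i ∈ Finset.Ico m N, b i * t i := by linarith
        _ = _ := hsplit.symm
  · refine Finset.sum_le_sum fun i _ => ?_
    nlinarith [hb_nonpos i, ht0 i, ht1 i]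

lemma obj_formula {N d T : ℕ} (v : Fin N → Fin T → ℝ) (Z : Matrix (Fin d) (Fin T) ℝ)
    (lam : Fin N → ℝ) (M : Matrix (Fin T) (Fin T) ℝ)
    (hM : M = ∑ α : Fin N, lam α • vecMulVec (v α) (v α)) (cc : ℝ) :
    Matrix.trace (cc • (Zᵀ * Z) - Zᵀ * Z * M)
      = cc * Matrix.trace (Zᵀ * Z)
        - ∑ α : Fin N, lam α * ((Z *ᵥ v α) ⬝ᵥ (Z *ᵥ v α)) := by
  rw [trace_sub, trace_smul, hM, Matrix.mul_sum, trace_sum, smul_eq_mul]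
  congr 1
  refine Finset.sum_congr rfl fun α _ => ?_
  rw [Matrix.mul_smul, trace_smul, trace_mul_vecMulVec, smul_eq_mul, ← mulVec_mulVec,
    dotProduct_mulVec, vecMul_transpose]

lemma t_le_one {N d T : ℕ} (v : Fin N → Fin T → ℝ)
    (hv : ∀ α β, v α ⬝ᵥ v β = if α = β then (1 : ℝ) else 0)
    (Z : Matrix (Fin d) (Fin T) ℝ)
    (hZ : ((1 : Matrix (Fin d) (Fin d) ℝ) - Z * Zᵀ).PosSemidef)
    (α : Fin N) : (Z *ᵥ v α) ⬝ᵥ (Z *ᵥ v α) ≤ 1 := by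
  set w := Z *ᵥ v α with hw
  set t := w ⬝ᵥ w with ht
  have ht0 : 0 ≤ t := Finset.sum_nonneg fun i _ => mul_self_nonneg _
  have hZt : (Zᵀ *ᵥ w) ⬝ᵥ (Zᵀ *ᵥ w) ≤ w ⬝ᵥ w := by
    have h := hZ.dotProduct_mulVec_nonneg w
    simp only [sub_mulVec, one_mulVec, dotProduct_sub, star_trivial] at h
    have h2 : w ⬝ᵥ ((Z * Zᵀ) *ᵥ w) = (Zᵀ *ᵥ w) ⬝ᵥ (Zᵀ *ᵥ w) := by
      rw [← mulVec_mulVec, dotProduct_mulVec, ← Matrix.mulVec_transpose]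
    linarith [h2 ▸ h]
  have h1 : t = v α ⬝ᵥ (Zᵀ *ᵥ w) := by
    rw [ht, hw, dotProduct_mulVec w, ← mulVec_transpose, dotProduct_comm]
  have hcs : (v α ⬝ᵥ (Zᵀ *ᵥ w)) ^ 2
      ≤ (v α ⬝ᵥ v α) * ((Zᵀ *ᵥ w) ⬝ᵥ (Zᵀ *ᵥ w)) := by
    have := Finset.sum_mul_sq_le_sq_mul_sq Finset.univ (v α) (Zᵀ *ᵥ w)
    simpa [dotProduct, sq] using this
  rw [hv, if_pos rfl, one_mul] at hcs
  have hsq : t ^ 2 ≤ t := by rw [h1]; rw [h1] at ht; nlinarith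
  nlinarith

lemma sum_t_le {N d T : ℕ} (v : Fin N → Fin T → ℝ)
    (hv2 : ∀ α β, v α ⬝ᵥ v β = if α = β then (1 : ℝ) else 0)
    (Z : Matrix (Fin d) (Fin T) ℝ) :
    ∑ α : Fin N, (Z *ᵥ v α) ⬝ᵥ (Z *ᵥ v α) ≤ Matrix.trace (Zᵀ * Z) := by
  set P : Matrix (Fin T) (Fin T) ℝ := ∑ α : Fin N, vecMulVec (v α) (v α) with hP
  have hPP : P * P = P := by
    rw [hP, Matrix.sum_mul]
    refine Finset.sum_congr rfl fun α _ => ?_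
    rw [Matrix.mul_sum, Finset.sum_eq_single α]
    · rw [_root_.vecMulVec_mul_vecMulVec, hv2, if_pos rfl, one_smul]
    · intro β _ hβ
      rw [_root_.vecMulVec_mul_vecMulVec, hv2, if_neg (fun h => hβ h.symm), zero_smul]
    · intro h; exact absurd (Finset.mem_univ α) h
  have hPt : Pᵀ = P := by
    rw [hP, transpose_sum]
    exact Finset.sum_congr rfl fun α _ => transpose_vecMulVec' _ _
  have htrP : Matrix.trace (Zᵀ * Z * P) = ∑ α : Fin N, (Z *ᵥ v α) ⬝ᵥ (Z *ᵥ v α) := by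
    rw [hP, Matrix.mul_sum, trace_sum]
    refine Finset.sum_congr rfl fun α _ => ?_
    rw [trace_mul_vecMulVec, ← mulVec_mulVec, dotProduct_mulVec, vecMul_transpose]
  have h0 := trace_transpose_mul_self_nonneg (Z * (1 - P))
  have he : (Z * (1 - P))ᵀ * (Z * (1 - P)) = (1 - P) * (Zᵀ * Z) * (1 - P) := by
    rw [transpose_mul, transpose_sub, transpose_one, hPt, Matrix.mul_assoc,
      ← Matrix.mul_assoc Zᵀ Z, ← Matrix.mul_assoc]
  rw [he] at h0
  have he2 : Matrix.trace ((1 - P) * (Zᵀ * Z) * (1 - P))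
      = Matrix.trace (Zᵀ * Z) - Matrix.trace (Zᵀ * Z * P) := by
    rw [trace_mul_comm]
    have hc : (1 - P) * ((1 - P) * (Zᵀ * Z)) = (1 - P) * (Zᵀ * Z) := by
      rw [← Matrix.mul_assoc]
      congr 1
      simp only [Matrix.sub_mul, Matrix.mul_sub, Matrix.mul_one, Matrix.one_mul, hPP]
      abel
    rw [hc, Matrix.sub_mul, Matrix.one_mul, trace_sub, trace_mul_comm P]
  rw [he2] at h0
  linarith [htrP ▸ h0]

lemma trace_le_d {d T : ℕ} (Z : Matrix (Fin d) (Fin T) ℝ)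
    (hZ2 : ((1 : Matrix (Fin d) (Fin d) ℝ) - Z * Zᵀ).PosSemidef) :
    Matrix.trace (Zᵀ * Z) ≤ (d : ℝ) := by
  rw [trace_mul_comm]
  have hdiag : ∀ i : Fin d, (Z * Zᵀ) i i ≤ 1 := by
    intro i
    have := posSemidef_diag_nonneg' hZ2 i
    simp only [Matrix.sub_apply, one_apply_eq] at this
    linarith
  calc Matrix.trace (Z * Zᵀ) = ∑ i : Fin d, (Z * Zᵀ) i i := rfl
    _ ≤ ∑ _i : Fin d, (1 : ℝ) := Finset.sum_le_sum fun i _ => hdiag i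
    _ = d := by simp

lemma dotProduct_self_nonneg' {n : Type*} [Fintype n] (x : n → ℝ) : 0 ≤ x ⬝ᵥ x :=
  Finset.sum_nonneg fun i _ => mul_self_nonneg _

/-- **Minimum value of the covariance-constrained predictive-coding objective.**
With `Ξ = [√ε (XXᵀ)^{-1/2} X ; Y]` having nonincreasing eigenvalues `λ α` of `ΞΞᵀ`,
the minimum of `tr[(c+ε) ZᵀZ − ZᵀZ (ε Xᵀ(XXᵀ)⁻¹X + YᵀY)]` over `Z ∈ ℝ^{d×T}` with
`Z Zᵀ ≼ I_d` equals `−∑_{α=1}^{min(d, dX+dY)} max(λ α − c − ε, 0)`. -/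
theorem ccpc_min_value
    (dX dY d T : ℕ) (X : Matrix (Fin dX) (Fin T) ℝ) (Y : Matrix (Fin dY) (Fin T) ℝ)
    (ε c : ℝ) (hε : 0 < ε) (hc : 0 ≤ c)
    (hX : IsUnit (X * Xᵀ).det)
    -- `S` is the positive-semidefinite square root of `XXᵀ`, so `S⁻¹ = (XXᵀ)^{-1/2}`
    (S : Matrix (Fin dX) (Fin dX) ℝ) (hS : S.PosSemidef) (hSsq : S * S = X * Xᵀ)
    -- singular value data of the concatenated whitened matrix `Ξ = [√ε S⁻¹ X ; Y]`
    (lam : Fin (dX + dY) → ℝ)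
    (u : Fin (dX + dY) → (Fin dX ⊕ Fin dY) → ℝ)
    (v : Fin (dX + dY) → Fin T → ℝ)
    (hlam_anti : Antitone lam) (hlam_nonneg : ∀ α, 0 ≤ lam α)
    (hu : ∀ α β, u α ⬝ᵥ u β = if α = β then (1 : ℝ) else 0)
    (hv : ∀ α β, v α ⬝ᵥ v β = if α = β then (1 : ℝ) else 0)
    (hSVD : fromRows (Real.sqrt ε • (S⁻¹ * X)) Y
      = ∑ α : Fin (dX + dY), Real.sqrt (lam α) • vecMulVec (u α) (v α)) :
    IsLeast
      { r : ℝ | ∃ Z : Matrix (Fin d) (Fin T) ℝ,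
          ((1 : Matrix (Fin d) (Fin d) ℝ) - Z * Zᵀ).PosSemidef ∧
          r = Matrix.trace ((c + ε) • (Zᵀ * Z)
            - Zᵀ * Z * (ε • (Xᵀ * (X * Xᵀ)⁻¹ * X) + Yᵀ * Y)) }
      (-(∑ α : Fin (min d (dX + dY)),
          max (lam (Fin.castLE (min_le_right d (dX + dY)) α) - c - ε) 0)) := by
  -- the Gram matrix identity
  have hSsym : Sᵀ = S := by
    have := hS.isHermitian
    rwa [IsHermitian, conjTranspose] at this
  have hAA : (Real.sqrt ε • (S⁻¹ * X))ᵀ * (Real.sqrt ε • (S⁻¹ * X))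
      = ε • (Xᵀ * (X * Xᵀ)⁻¹ * X) := by
    rw [transpose_smul, transpose_mul, transpose_nonsing_inv, hSsym,
      Matrix.smul_mul, Matrix.mul_smul, smul_smul, Real.mul_self_sqrt hε.le,
      ← hSsq, Matrix.mul_inv_rev]
    rw [Matrix.mul_assoc, Matrix.mul_assoc, Matrix.mul_assoc]
  have hM : ε • (Xᵀ * (X * Xᵀ)⁻¹ * X) + Yᵀ * Y
      = ∑ α : Fin (dX + dY), lam α • vecMulVec (v α) (v α) := by
    have key : ε • (Xᵀ * (X * Xᵀ)⁻¹ * X) + Yᵀ * Y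
        = (fromRows (Real.sqrt ε • (S⁻¹ * X)) Y)ᵀ * (fromRows (Real.sqrt ε • (S⁻¹ * X)) Y) := by
      rw [transpose_fromRows, fromCols_mul_fromRows, hAA]
    rw [key, hSVD, transpose_sum, Matrix.sum_mul]
    refine Finset.sum_congr rfl fun α _ => ?_
    rw [Matrix.mul_sum, Finset.sum_eq_single α]
    · simp [transpose_vecMulVec', Matrix.smul_mul, Matrix.mul_smul,
        _root_.vecMulVec_mul_vecMulVec, hu, smul_smul, Real.mul_self_sqrt (hlam_nonneg α)]
    · intro β _ hβ
      have h0 : u α ⬝ᵥ u β = 0 := by rw [hu, if_neg (fun h => hβ h.symm)]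
      simp [transpose_vecMulVec', Matrix.smul_mul, Matrix.mul_smul,
        _root_.vecMulVec_mul_vecMulVec, h0]
    · intro h; exact absurd (Finset.mem_univ α) h
  set m := min d (dX + dY) with hmdef
  have hmd : m ≤ d := min_le_left _ _
  have hmN : m ≤ (dX + dY) := min_le_right _ _
  -- ℕ-indexed versions of the data
  set lam' : ℕ → ℝ := fun k => if h : k < (dX + dY) then lam ⟨k, h⟩ else 0 with hlam'
  have htarget : (∑ α : Fin (min d (dX + dY)),
        max (lam (Fin.castLE (min_le_right d (dX + dY)) α) - c - ε) 0)
      = ∑ k ∈ Finset.range m, max (lam' k - c - ε) 0 := by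
    rw [← Fin.sum_univ_eq_sum_range (fun k => max (lam' k - c - ε) 0) m]
    refine Finset.sum_congr rfl fun α _ => ?_
    have hα : (α : ℕ) < (dX + dY) := lt_of_lt_of_le α.2 hmN
    rw [hlam']
    simp only [dif_pos hα]
    rfl
  constructor
  · -- membership: the optimal Z
    set w : Fin d → Fin T → ℝ := fun i =>
      if h : (i : ℕ) < (dX + dY) then (if c + ε < lam ⟨i, h⟩ then v ⟨i, h⟩ else 0) else 0 with hwdef
    set s : Fin d → ℝ := fun i =>
      if h : (i : ℕ) < (dX + dY) then (if c + ε < lam ⟨i, h⟩ then (1 : ℝ) else 0) else 0 with hsdef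
    set Z : Matrix (Fin d) (Fin T) ℝ := Matrix.of (fun i j => w i j) with hZdef
    have hww : ∀ i i', w i ⬝ᵥ w i' = if i = i' then s i else 0 := by
      intro i i'
      rcases eq_or_ne i i' with rfl | hne
      · rw [if_pos rfl, hwdef, hsdef]
        by_cases h : (i : ℕ) < (dX + dY)
        · simp only [dif_pos h]
          by_cases h2 : c + ε < lam ⟨i, h⟩
          · simp [h2, hv]
          · simp [h2]
        · simp only [dif_neg h, dotProduct_zero]
      · rw [if_neg hne, hwdef]
        by_cases h : (i : ℕ) < (dX + dY)
        · by_cases h' : (i' : ℕ) < (dX + dY)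
          · simp only [dif_pos h, dif_pos h']
            have hmk : (⟨(i : ℕ), h⟩ : Fin (dX + dY)) ≠ ⟨(i' : ℕ), h'⟩ := by
              intro hk
              exact hne (Fin.val_injective (by simpa using congrArg Fin.val hk))
            by_cases h2 : c + ε < lam ⟨i, h⟩ <;> by_cases h2' : c + ε < lam ⟨i', h'⟩ <;>
              simp [h2, h2', hv, hmk]
          · simp only [dif_pos h, dif_neg h', dotProduct_zero]
        · simp only [dif_neg h, zero_dotProduct]
    have hZZt : Z * Zᵀ = diagonal s := by
      ext i i'
      rw [Matrix.mul_apply, diagonal_apply]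
      rw [← hww i i']
      simp [hZdef, dotProduct]
    refine ⟨Z, ?_, ?_⟩
    · rw [hZZt, ← diagonal_one, diagonal_sub]
      refine Matrix.PosSemidef.diagonal ?_
      rw [Pi.le_def]
      intro i
      simp only [Pi.zero_apply, hsdef]
      by_cases h : (i : ℕ) < (dX + dY)
      · simp only [dif_pos h]
        by_cases h2 : c + ε < lam ⟨i, h⟩ <;> simp [h2]
      · simp [dif_neg h]
    · -- value computation
      rw [obj_formula v Z lam _ hM (c + ε)]
      have htr : Matrix.trace (Zᵀ * Z) = ∑ i : Fin d, s i := by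
        rw [trace_mul_comm, hZZt, trace_diagonal]
      -- compute t β
      have htb : ∀ β : Fin (dX + dY), (Z *ᵥ v β) ⬝ᵥ (Z *ᵥ v β)
          = if (β : ℕ) < d ∧ c + ε < lam β then (1 : ℝ) else 0 := by
        intro β
        have hZv : ∀ i : Fin d, (Z *ᵥ v β) i = w i ⬝ᵥ v β := fun i => rfl
        have hq : ∀ i : Fin d, w i ⬝ᵥ v β
            = if (i : ℕ) = (β : ℕ) ∧ c + ε < lam β then (1 : ℝ) else 0 := by
          intro i
          rw [hwdef]
          dsimp only
          by_cases h : (i : ℕ) < (dX + dY)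
          · rw [dif_pos h]
            by_cases hib : (i : ℕ) = (β : ℕ)
            · have hmk : (⟨(i : ℕ), h⟩ : Fin (dX + dY)) = β := Fin.val_injective (by simpa using hib)
              rw [hmk]
              by_cases h2 : c + ε < lam β
              · rw [if_pos h2, hv, if_pos rfl, if_pos ⟨hib, h2⟩]
              · rw [if_neg h2, zero_dotProduct, if_neg (by tauto)]
            · have hmk : (⟨(i : ℕ), h⟩ : Fin (dX + dY)) ≠ β := by
                intro hk; exact hib (congrArg Fin.val hk)
              by_cases h2 : c + ε < lam ⟨i, h⟩
              · rw [if_pos h2, hv, if_neg hmk, if_neg (by tauto)]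
              · rw [if_neg h2, zero_dotProduct, if_neg (by tauto)]
          · have hib : (i : ℕ) ≠ (β : ℕ) := by
              intro hk
              exact h (hk ▸ β.2)
            rw [dif_neg h, zero_dotProduct, if_neg (by tauto)]
        unfold dotProduct
        simp only [hZv, hq]
        by_cases hβd : (β : ℕ) < d
        · rw [Finset.sum_eq_single (⟨(β : ℕ), hβd⟩ : Fin d)]
          · by_cases h2 : c + ε < lam β
            · rw [if_pos ⟨rfl, h2⟩, if_pos ⟨hβd, h2⟩, mul_one]
            · rw [if_neg (by tauto), if_neg (by tauto), mul_zero]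
          · intro i _ hi
            have : (i : ℕ) ≠ (β : ℕ) := by
              intro hk
              exact hi (Fin.val_injective (by simpa using hk))
            rw [if_neg (by tauto), mul_zero]
          · intro h; exact absurd (Finset.mem_univ _) h
        · rw [if_neg (by tauto)]
          refine Finset.sum_eq_zero fun i _ => ?_
          have : (i : ℕ) ≠ (β : ℕ) := by
            intro hk
            exact hβd (hk ▸ i.2)
          rw [if_neg (by tauto), mul_zero]
      rw [htr]
      -- convert to range sums
      set f : ℕ → ℝ := fun k => if h : k < (dX + dY) then (if c + ε < lam ⟨k, h⟩ then (1:ℝ) else 0) else 0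
        with hfdef
      set g : ℕ → ℝ := fun k => if h : k < (dX + dY)
          then (if k < d ∧ c + ε < lam ⟨k, h⟩ then lam ⟨k, h⟩ else 0) else 0 with hgdef
      have hs_sum : ∑ i : Fin d, s i = ∑ k ∈ Finset.range m, f k := by
        have e1 : ∑ i : Fin d, s i = ∑ k ∈ Finset.range d, f k := by
          rw [← Fin.sum_univ_eq_sum_range f d]
        rw [e1]
        symm
        refine Finset.sum_subset (Finset.range_subset_range.2 hmd) ?_
        intro k hkd hkm
        have hk1 : k < d := Finset.mem_range.mp hkd
        have hk2 : ¬ k < (dX + dY) := by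
          intro hk2
          exact hkm (Finset.mem_range.mpr (lt_min hk1 hk2))
        simp only [hfdef, dif_neg hk2]
      have ht_sum : ∑ α : Fin (dX + dY), lam α * ((Z *ᵥ v α) ⬝ᵥ (Z *ᵥ v α))
          = ∑ k ∈ Finset.range m, g k := by
        have e1 : ∑ α : Fin (dX + dY), lam α * ((Z *ᵥ v α) ⬝ᵥ (Z *ᵥ v α))
            = ∑ k ∈ Finset.range (dX + dY), g k := by
          rw [← Fin.sum_univ_eq_sum_range g (dX + dY)]
          refine Finset.sum_congr rfl fun α _ => ?_
          rw [htb α]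
          simp only [hgdef, dif_pos α.2, Fin.eta]
          by_cases hcond : (α : ℕ) < d ∧ c + ε < lam α
          · rw [if_pos hcond, if_pos hcond, mul_one]
          · rw [if_neg hcond, if_neg hcond, mul_zero]
        rw [e1]
        symm
        refine Finset.sum_subset (Finset.range_subset_range.2 hmN) ?_
        intro k hkN hkm
        have hk1 : k < dX + dY := Finset.mem_range.mp hkN
        have hk2 : ¬ k < d := fun hk2 => hkm (Finset.mem_range.mpr (lt_min hk2 hk1))
        simp only [hgdef, dif_pos hk1]
        rw [if_neg (by tauto)]
      rw [hs_sum, ht_sum, htarget, Finset.mul_sum, ← Finset.sum_sub_distrib,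
        ← Finset.sum_neg_distrib]
      refine Finset.sum_congr rfl fun k hk => ?_
      have hk1 : k < d := lt_of_lt_of_le (Finset.mem_range.mp hk) hmd
      have hk2 : k < dX + dY := lt_of_lt_of_le (Finset.mem_range.mp hk) hmN
      simp only [hfdef, hgdef, hlam', dif_pos hk2]
      by_cases h2 : c + ε < lam ⟨k, hk2⟩
      · rw [if_pos h2, if_pos ⟨hk1, h2⟩, max_eq_left (by linarith), mul_one]
        ring
      · rw [if_neg h2, if_neg (by tauto), max_eq_right (by linarith), mul_zero]
        ring
  · -- lower bound
    rintro r ⟨Z, hZ, rfl⟩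
    rw [obj_formula v Z lam _ hM (c + ε)]
    set t : Fin (dX + dY) → ℝ := fun α => (Z *ᵥ v α) ⬝ᵥ (Z *ᵥ v α) with htdef
    set t' : ℕ → ℝ := fun k => if h : k < (dX + dY) then t ⟨k, h⟩ else 0 with ht'def
    have ht'0 : ∀ k, 0 ≤ t' k := by
      intro k; rw [ht'def]
      by_cases h : k < (dX + dY)
      · simpa [dif_pos h] using dotProduct_self_nonneg' (Z *ᵥ v ⟨k, h⟩)
      · simp [dif_neg h]
    have ht'1 : ∀ k, t' k ≤ 1 := by
      intro k; rw [ht'def]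
      by_cases h : k < (dX + dY)
      · simpa [dif_pos h] using t_le_one v hv Z hZ ⟨k, h⟩
      · simp [dif_neg h]
    set a : ℕ → ℝ := fun k => if h : k < (dX + dY) then c + ε - lam ⟨k, h⟩ else c + ε with hadef
    have ha_mono : Monotone a := by
      intro i j hij
      rw [hadef]
      by_cases hj : j < (dX + dY)
      · have hi : i < (dX + dY) := lt_of_le_of_lt hij hj
        simp only [dif_pos hi, dif_pos hj]
        have := hlam_anti (show (⟨i, hi⟩ : Fin (dX + dY)) ≤ ⟨j, hj⟩ from hij)
        linarith
      · by_cases hi : i < (dX + dY)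
        · simp only [dif_pos hi, dif_neg hj]
          linarith [hlam_nonneg ⟨i, hi⟩]
        · simp [dif_neg hi, dif_neg hj]
    have hsumt' : ∑ k ∈ Finset.range (dX + dY), t' k = ∑ α : Fin (dX + dY), t α := by
      rw [← Fin.sum_univ_eq_sum_range t' (dX + dY)]
      refine Finset.sum_congr rfl fun α _ => ?_
      rw [ht'def]
      simp only [dif_pos α.2]
    have hbud : (∑ k ∈ Finset.range (dX + dY), t' k) ≤ (m : ℝ) ∨ m = (dX + dY) := by
      rcases le_or_gt (dX + dY) d with hNd | hdN
      · right; rw [hmdef]; exact min_eq_right hNd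
      · left
        have h1 : ∑ α : Fin (dX + dY), t α ≤ Matrix.trace (Zᵀ * Z) := sum_t_le v hv Z
        have h2 : Matrix.trace (Zᵀ * Z) ≤ (d : ℝ) := trace_le_d Z hZ
        have h3 : m = d := min_eq_left hdN.le
        rw [hsumt', h3]
        linarith
    have hkey := key_sum (dX + dY) m hmN a t' ha_mono ht'0 ht'1 hbud
    have hlhs : ∑ k ∈ Finset.range m, min (a k) 0
        = -(∑ k ∈ Finset.range m, max (lam' k - c - ε) 0) := by
      rw [← Finset.sum_neg_distrib]
      refine Finset.sum_congr rfl fun k hk => ?_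
      have hkN : k < (dX + dY) := lt_of_lt_of_le (Finset.mem_range.mp hk) hmN
      rw [hadef, hlam']
      simp only [dif_pos hkN]
      rcases le_total (lam ⟨k, hkN⟩) (c + ε) with h | h
      · rw [min_eq_right (by linarith), max_eq_right (by linarith)]
        simp
      · rw [min_eq_left (by linarith), max_eq_left (by linarith)]
        ring
    have hrhs : ∑ k ∈ Finset.range (dX + dY), a k * t' k
        = (c + ε) * (∑ α : Fin (dX + dY), t α) - ∑ α : Fin (dX + dY), lam α * t α := by
      rw [← Fin.sum_univ_eq_sum_range (fun k => a k * t' k) (dX + dY), Finset.mul_sum,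
        ← Finset.sum_sub_distrib]
      refine Finset.sum_congr rfl fun α _ => ?_
      rw [hadef, ht'def]
      simp only [dif_pos α.2]
      have : (⟨(α : ℕ), α.2⟩ : Fin (dX + dY)) = α := Fin.eta α α.2
      rw [this]
      ring
    rw [htarget, ← hlhs]
    have hfin : ∑ k ∈ Finset.range (dX + dY), a k * t' k
        ≤ (c + ε) * Matrix.trace (Zᵀ * Z) - ∑ α : Fin (dX + dY), lam α * t α := by
      rw [hrhs]
      have h1 : ∑ α : Fin (dX + dY), t α ≤ Matrix.trace (Zᵀ * Z) := sum_t_le v hv Z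
      have : (c + ε) * (∑ α : Fin (dX + dY), t α) ≤ (c + ε) * Matrix.trace (Zᵀ * Z) :=
        mul_le_mul_of_nonneg_left h1 (by linarith)
      linarith
    calc ∑ k ∈ Finset.range m, min (a k) 0 ≤ ∑ k ∈ Finset.range (dX + dY), a k * t' k := hkey
      _ ≤ _ := hfin
end

section
/- Let X ∈ ℝ^{d_X×T} and Y ∈ ℝ^{d_Y×T} be whitened, i.e. XX^⊤ = I_{d_X} and YY^⊤ = I_{d_Y}, let ε > 0, c ≥ 0, and set R = XY^⊤ ∈ ℝ^{d_X×d_Y}. Consider the symmetric matrix M = ΞΞ^⊤ where Ξ = [ε^{1/2}X ; Y], i.e. M = [[εI_{d_X}, ε^{1/2}R],[ε^{1/2}R^⊤, I_{d_Y}]]. Then: (i) if ε ≥ 1, the number of eigenvalues of M strictly greater than c+ε is at most rank(R) ≤ min(rank X, rank Y); (ii) if ε < 1, the number of eigenvalues of M strictly greater than c+ε is at most d_Y = rank(Y). -/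
open Matrix Finset

lemma star_real_eq_transpose {n : Type*} [Fintype n] (U : Matrix n n ℝ) : star U = Uᵀ := by
  ext i j
  simp [Matrix.star_eq_conjTranspose, Matrix.conjTranspose_apply]

lemma dot_self_nonneg {n : Type*} [Fintype n] (v : n → ℝ) : 0 ≤ v ⬝ᵥ v :=
  Finset.sum_nonneg fun i _ => mul_self_nonneg _

/-- Core counting lemma. -/
lemma eig_count_aux {n : Type*} [Fintype n] [DecidableEq n]
    (M : Matrix n n ℝ) (hM : M.IsHermitian) (t : ℝ)
    (W : Submodule ℝ (n → ℝ))
    (hW : ∀ v ∈ W, v ⬝ᵥ (M *ᵥ v) ≤ t * (v ⬝ᵥ v)) :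
    Nat.card {i // t < hM.eigenvalues i} + Module.finrank ℝ W ≤ Fintype.card n := by
  classical
  set U : Matrix n n ℝ := (hM.eigenvectorUnitary : Matrix n n ℝ) with hU
  set L : (n → ℝ) →ₗ[ℝ] (n → ℝ) := (star U).mulVecLin with hL
  have hUU : U * star U = 1 := (Matrix.mem_unitaryGroup_iff).mp hM.eigenvectorUnitary.2
  have hvU : ∀ v : n → ℝ, v ᵥ* U = star U *ᵥ v := by
    intro v
    rw [star_real_eq_transpose, mulVec_transpose]
  have key1 : ∀ v : n → ℝ, v ⬝ᵥ (M *ᵥ v) = ∑ i, hM.eigenvalues i * (L v i)^2 := by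
    intro v
    conv_lhs => rw [hM.spectral_theorem, Unitary.conjStarAlgAut_apply]
    rw [← mulVec_mulVec, ← mulVec_mulVec, dotProduct_mulVec, hvU]
    simp only [mulVec_diagonal, dotProduct, Function.comp_apply, hL, Matrix.mulVecLin_apply]
    refine Finset.sum_congr rfl fun i _ => ?_
    rw [RCLike.ofReal_real_eq_id]
    simp only [id]
    ring
  have key2 : ∀ v : n → ℝ, v ⬝ᵥ v = ∑ i, (L v i)^2 := by
    intro v
    have h1 : U *ᵥ (Uᵀ *ᵥ v) = v := by
      rw [mulVec_mulVec, ← star_real_eq_transpose, hUU, one_mulVec]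
    have h2 : (star U *ᵥ v) ⬝ᵥ (star U *ᵥ v) = v ⬝ᵥ v := by
      conv_lhs => rw [star_real_eq_transpose, dotProduct_mulVec, vecMul_transpose, h1]
    rw [← h2]
    simp only [dotProduct, hL, Matrix.mulVecLin_apply]
    exact Finset.sum_congr rfl fun i _ => (sq _).symm
  have key3 : ∀ v : n → ℝ, L v = 0 → v = 0 := by
    intro v hv
    have h1 : U *ᵥ (L v) = v := by
      simp only [hL, Matrix.mulVecLin_apply, mulVec_mulVec, hUU, one_mulVec]
    rw [hv] at h1
    simpa using h1.symm
  set s : Finset n := univ.filter (fun i => t < hM.eigenvalues i) with hs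
  have hcard : Nat.card {i // t < hM.eigenvalues i} = s.card := by
    rw [Nat.card_eq_fintype_card, Fintype.card_subtype]
  set fam : s → (n → ℝ) := fun j => ⇑(hM.eigenvectorBasis j) with hfam
  have hLfam : ∀ j : s, L (fam j) = Pi.single (j : n) (1 : ℝ) := fun j =>
    hM.star_eigenvectorUnitary_mulVec j
  have li : LinearIndependent ℝ fam := by
    refine LinearIndependent.of_comp L ?_
    have h2 : (⇑L ∘ fam) = fun j : s => Pi.single (j : n) (1 : ℝ) := funext fun j => hLfam j
    rw [h2, Fintype.linearIndependent_iff]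
    intro g hg j
    have h3 := congrFun hg (j : n)
    simp only [Finset.sum_apply, Pi.smul_apply, Pi.single_apply, smul_eq_mul, mul_ite,
      mul_one, mul_zero, Pi.zero_apply, Subtype.val_inj] at h3
    rwa [Finset.sum_ite_eq Finset.univ j g, if_pos (Finset.mem_univ j)] at h3
  set S : Submodule ℝ (n → ℝ) := Submodule.span ℝ (Set.range fam) with hS
  have hfinS : Module.finrank ℝ S = s.card := by
    rw [finrank_span_eq_card li, Fintype.card_coe]
  have hsupp : ∀ v ∈ S, ∀ i, i ∉ s → L v i = 0 := by
    intro v hv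
    induction hv using Submodule.span_induction with
    | mem x hx =>
      obtain ⟨j, rfl⟩ := hx
      intro i hi
      rw [hLfam j]
      have : i ≠ (j : n) := fun h => hi (h ▸ j.2)
      simp [Pi.single_apply, this]
    | zero => intro i _; simp
    | add x y _ _ hx hy => intro i hi; simp [hx i hi, hy i hi]
    | smul a x _ hx => intro i hi; simp [hx i hi]
  have hSQ : ∀ v ∈ S, v ≠ 0 → t * (v ⬝ᵥ v) < v ⬝ᵥ (M *ᵥ v) := by
    intro v hv hv0
    rw [key1, key2, ← sub_pos, Finset.mul_sum, ← Finset.sum_sub_distrib]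
    have hterm : ∀ i, hM.eigenvalues i * L v i ^ 2 - t * L v i ^ 2
        = (hM.eigenvalues i - t) * L v i ^ 2 := fun i => by ring
    obtain ⟨i0, hi0⟩ : ∃ i, L v i ≠ 0 := by
      by_contra h
      push_neg at h
      exact hv0 (key3 v (funext h))
    have hi0s : i0 ∈ s := by
      by_contra h
      exact hi0 (hsupp v hv i0 h)
    refine Finset.sum_pos' (fun i _ => ?_) ⟨i0, Finset.mem_univ i0, ?_⟩
    · rw [hterm]
      by_cases h : i ∈ s
      · have h1 : t < hM.eigenvalues i := by simpa [hs] using h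
        exact mul_nonneg (by linarith) (sq_nonneg _)
      · simp [hsupp v hv i h]
    · rw [hterm]
      have h1 : t < hM.eigenvalues i0 := by simpa [hs] using hi0s
      exact mul_pos (by linarith) (by positivity)
  have hdisj : Disjoint S W := by
    rw [Submodule.disjoint_def]
    intro x hxS hxW
    by_contra hx0
    exact absurd (hW x hxW) (not_le.mpr (hSQ x hxS hx0))
  have hfin := Submodule.finrank_add_finrank_le_of_disjoint hdisj
  rw [hfinS, Module.finrank_fintype_fun_eq_card] at hfin
  omega


/-- **Rank bounds for intermediate CCPC layers with whitened adjacent layers.**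
For whitened `X` (`XXᵀ = I`) and `Y` (`YYᵀ = I`) with cross-covariance `R = XYᵀ`, and
`M = ΞΞᵀ` for `Ξ = [√ε X ; Y]`, i.e. `M = [[εI, √ε R],[√ε Rᵀ, I]]`:
(i) if `ε ≥ 1`, the number of eigenvalues of `M` strictly greater than `c + ε` is at most
`rank R`, which is at most `min(rank X, rank Y)`;
(ii) if `ε < 1`, the number of eigenvalues of `M` strictly greater than `c + ε` is at most
`dY = rank Y`. -/
theorem ccpc_whitened_rank_bounds
    (dX dY T : ℕ) (X : Matrix (Fin dX) (Fin T) ℝ) (Y : Matrix (Fin dY) (Fin T) ℝ)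
    (hXw : X * Xᵀ = 1) (hYw : Y * Yᵀ = 1)
    (ε c : ℝ) (hε : 0 < ε) (hc : 0 ≤ c)
    (R : Matrix (Fin dX) (Fin dY) ℝ) (hR : R = X * Yᵀ)
    (M : Matrix (Fin dX ⊕ Fin dY) (Fin dX ⊕ Fin dY) ℝ)
    (hM : M = fromBlocks (ε • (1 : Matrix (Fin dX) (Fin dX) ℝ)) (Real.sqrt ε • R)
      (Real.sqrt ε • Rᵀ) (1 : Matrix (Fin dY) (Fin dY) ℝ))
    (hMh : M.IsHermitian) :
    (1 ≤ ε →
      Nat.card {i : Fin dX ⊕ Fin dY // c + ε < hMh.eigenvalues i} ≤ R.rank ∧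
      R.rank ≤ min X.rank Y.rank) ∧
    (ε < 1 →
      Nat.card {i : Fin dX ⊕ Fin dY // c + ε < hMh.eigenvalues i} ≤ dY ∧
      Y.rank = dY) := by
  classical
  have hcardn : Fintype.card (Fin dX ⊕ Fin dY) = dX + dY := by simp
  have hYr : Y.rank = dY := by
    refine le_antisymm Y.rank_le_height ?_
    have h1 : (Y * Yᵀ).rank ≤ Y.rank := (Matrix.rank_mul_le Y Yᵀ).trans (min_le_left _ _)
    rw [hYw] at h1
    simpa using h1
  constructor
  · -- case ε ≥ 1
    intro h1ε
    constructor
    · set L1 : ((Fin dX ⊕ Fin dY) → ℝ) →ₗ[ℝ] (Fin dY → ℝ) :=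
        Rᵀ.mulVecLin ∘ₗ LinearMap.funLeft ℝ ℝ Sum.inl with hL1
      have hform : ∀ v ∈ LinearMap.ker L1, v ⬝ᵥ (M *ᵥ v) ≤ (c + ε) * (v ⬝ᵥ v) := by
        intro v hv
        set x : Fin dX → ℝ := v ∘ Sum.inl with hx
        set y : Fin dY → ℝ := v ∘ Sum.inr with hy
        have hker : Rᵀ *ᵥ x = 0 := by
          have h0 := LinearMap.mem_ker.mp hv
          rw [mulVec_transpose]
          have h0' : Rᵀ *ᵥ (v ∘ Sum.inl) = 0 := h0
          simpa [hL1, Matrix.mulVecLin_apply, LinearMap.funLeft_apply, mulVec_transpose,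
            hx] using h0'
        have hvxy : v = Sum.elim x y := by funext i; cases i <;> rfl
        have hxR : x ⬝ᵥ (R *ᵥ y) = 0 := by
          rw [dotProduct_mulVec, ← mulVec_transpose, hker, zero_dotProduct]
        have hMv : M *ᵥ v = Sum.elim (ε • x + Real.sqrt ε • (R *ᵥ y))
            (Real.sqrt ε • (Rᵀ *ᵥ x) + y) := by
          rw [hM, hvxy, fromBlocks_mulVec]
          congr 1 <;> simp [smul_mulVec, one_mulVec]
        rw [hvxy] at hMv ⊢
        rw [hMv, sumElim_dotProduct_sumElim, sumElim_dotProduct_sumElim]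
        rw [hker]
        simp only [dotProduct_add, dotProduct_smul, hxR, smul_eq_mul, mul_zero, add_zero,
          smul_zero, zero_add]
        have hx0 : 0 ≤ x ⬝ᵥ x := dot_self_nonneg x
        have hy0 : 0 ≤ y ⬝ᵥ y := dot_self_nonneg y
        nlinarith
      have hmain := eig_count_aux M hMh (c + ε) (LinearMap.ker L1) hform
      have hrn := LinearMap.finrank_range_add_finrank_ker L1
      rw [Module.finrank_fintype_fun_eq_card, hcardn] at hrn
      rw [hcardn] at hmain
      have hrange : Module.finrank ℝ (LinearMap.range L1) ≤ R.rank := by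
        have h1 : LinearMap.range L1 ≤ LinearMap.range Rᵀ.mulVecLin :=
          LinearMap.range_comp_le_range _ _
        have h2 := Submodule.finrank_mono h1
        rwa [show Module.finrank ℝ (LinearMap.range Rᵀ.mulVecLin) = Rᵀ.rank from rfl,
          Matrix.rank_transpose] at h2
      omega
    · have h1 := Matrix.rank_mul_le X Yᵀ
      rw [← hR, Matrix.rank_transpose] at h1
      exact h1
  · -- case ε < 1
    intro hε1
    refine ⟨?_, hYr⟩
    set L2 : ((Fin dX ⊕ Fin dY) → ℝ) →ₗ[ℝ] (Fin dY → ℝ) :=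
      LinearMap.funLeft ℝ ℝ Sum.inr with hL2
    have hform : ∀ v ∈ LinearMap.ker L2, v ⬝ᵥ (M *ᵥ v) ≤ (c + ε) * (v ⬝ᵥ v) := by
      intro v hv
      set x : Fin dX → ℝ := v ∘ Sum.inl with hx
      have hker : v ∘ Sum.inr = 0 := by
        have := LinearMap.mem_ker.mp hv
        exact this
      have hvxy : v = Sum.elim x 0 := by
        funext i
        cases i with
        | inl i => rfl
        | inr j => exact congrFun hker j
      have hMv : M *ᵥ v = Sum.elim (ε • x + Real.sqrt ε • (R *ᵥ (0 : Fin dY → ℝ)))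
          (Real.sqrt ε • (Rᵀ *ᵥ x) + 0) := by
        rw [hM, hvxy, fromBlocks_mulVec]
        congr 1 <;> simp [smul_mulVec, one_mulVec]
      rw [hvxy] at hMv ⊢
      rw [hMv, sumElim_dotProduct_sumElim, sumElim_dotProduct_sumElim]
      simp only [mulVec_zero, smul_zero, add_zero, dotProduct_add, dotProduct_smul,
        zero_dotProduct, smul_eq_mul]
      have hx0 : 0 ≤ x ⬝ᵥ x := dot_self_nonneg x
      nlinarith
    have hmain := eig_count_aux M hMh (c + ε) (LinearMap.ker L2) hform
    have hrn := LinearMap.finrank_range_add_finrank_ker L2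
    rw [Module.finrank_fintype_fun_eq_card, hcardn] at hrn
    rw [hcardn] at hmain
    have hrange : Module.finrank ℝ (LinearMap.range L2) = dY := by
      rw [LinearMap.range_eq_top.mpr
        (LinearMap.funLeft_surjective_of_injective ℝ ℝ _ Sum.inr_injective)]
      rw [finrank_top, Module.finrank_fintype_fun_eq_card, Fintype.card_fin]
    omega
end

section
/- Let X ∈ ℝ^{d_X×T} and Y ∈ ℝ^{d_Y×T} be whitened (XX^⊤ = I_{d_X}, YY^⊤ = I_{d_Y}), let c > 0, and let R = XY^⊤ have simple nonzero singular values ρ_1 > … > ρ_r > 0 with ρ_i² ≠ c for all i, left singular vectors a_i ∈ ℝ^{d_X} and right singular vectors b_i ∈ ℝ^{d_Y}. For ε > 0 let λ_i⁺(ε) = (1+ε+√((1−ε)²+4ερ_i²))/2 be the corresponding eigenvalue of ΞΞ^⊤ for Ξ = [ε^{1/2}X ; Y], and let v_i(ε) ∈ ℝ^T be the associated unit right singular vector of Ξ (sign chosen so that ⟨v_i(ε), X^⊤a_i⟩ ≥ 0). Then as ε → ∞: (i) for each i, λ_i⁺(ε) > c+ε holds for all sufficiently large ε if ρ_i² > c,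 and fails for all sufficiently large ε if ρ_i² < c; (ii) v_i(ε) → X^⊤a_i, the i-th canonical-correlation score of X with respect to Y. Hence in the limit ε → ∞ the optimal internal representation is driven by the maximally correlated directions between X and Y, retained exactly when the squared canonical correlation exceeds c. -/
open Matrix Finset Filter

namespace CCPC
variable {m n : ℕ}

lemma dot_self_nonneg (x : Fin n → ℝ) : 0 ≤ x ⬝ᵥ x :=
  Finset.sum_nonneg fun _ _ => mul_self_nonneg _

lemma cs (x y : Fin n → ℝ) : (x ⬝ᵥ y) ^ 2 ≤ (x ⬝ᵥ x) * (y ⬝ᵥ y) := by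
  have h := Finset.sum_mul_sq_le_sq_mul_sq Finset.univ x y
  simpa [dotProduct, sq] using h

lemma dotA (A : Matrix (Fin m) (Fin n) ℝ) (x : Fin n → ℝ) (y : Fin m → ℝ) :
    (A *ᵥ x) ⬝ᵥ y = x ⬝ᵥ (Aᵀ *ᵥ y) := by
  rw [dotProduct_comm, dotProduct_mulVec, mulVec_transpose, dotProduct_comm]

lemma sum_dot {ι : Type*} (s : Finset ι) (f : ι → Fin n → ℝ) (y : Fin n → ℝ) :
    (∑ j ∈ s, f j) ⬝ᵥ y = ∑ j ∈ s, f j ⬝ᵥ y := by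
  simp only [dotProduct, Finset.sum_apply, Finset.sum_mul]
  exact Finset.sum_comm

lemma contract_of_dot {T : ℕ} {x y : Fin T → ℝ} (h : y ⬝ᵥ y = x ⬝ᵥ y) : y ⬝ᵥ y ≤ x ⬝ᵥ x := by
  have hcs := cs x y
  have h0 : 0 ≤ y ⬝ᵥ y := dot_self_nonneg y
  have h1 : 0 ≤ x ⬝ᵥ x := dot_self_nonneg x
  rcases h0.eq_or_lt with h2 | h2
  · rw [← h2]; exact h1
  · rw [← h] at hcs
    nlinarith [hcs, h2]

lemma compl_contract {T : ℕ} (x y : Fin T → ℝ) (h : y ⬝ᵥ y = x ⬝ᵥ y) :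
    (x - y) ⬝ᵥ (x - y) ≤ x ⬝ᵥ x := by
  have h0 : 0 ≤ y ⬝ᵥ y := dot_self_nonneg y
  have hc : y ⬝ᵥ x = x ⬝ᵥ y := dotProduct_comm _ _
  simp only [sub_dotProduct, dotProduct_sub]
  linarith

lemma dot_sum_orth {T r : ℕ} (u : Fin r → Fin T → ℝ)
    (hu : ∀ j k, u j ⬝ᵥ u k = if j = k then (1:ℝ) else 0) (g : Fin r → ℝ) (k : Fin r) :
    (∑ j, g j • u j) ⬝ᵥ u k = g k := by
  rw [sum_dot, Finset.sum_eq_single k]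
  · rw [smul_dotProduct, hu k k, if_pos rfl, smul_eq_mul, mul_one]
  · intro j _ hj
    rw [smul_dotProduct, hu j k, if_neg hj, smul_zero]
  · intro h; exact absurd (Finset.mem_univ k) h

lemma abstract_ineq {T r : ℕ} (P Q : Matrix (Fin T) (Fin T) ℝ)
    (hPt : Pᵀ = P) (hQt : Qᵀ = Q)
    (hPid : ∀ x : Fin T → ℝ, P *ᵥ (P *ᵥ x) = P *ᵥ x)
    (hQid : ∀ x : Fin T → ℝ, Q *ᵥ (Q *ᵥ x) = Q *ᵥ x)
    (ρ : Fin r → ℝ) (u : Fin r → Fin T → ℝ)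
    (hu : ∀ j k, u j ⬝ᵥ u k = if j = k then (1:ℝ) else 0)
    (hPu : ∀ j, P *ᵥ u j = u j)
    (hPQP : ∀ x : Fin T → ℝ, P *ᵥ (Q *ᵥ (P *ᵥ x)) = ∑ j, (ρ j ^ 2 * (u j ⬝ᵥ x)) • u j)
    (i : Fin r) (ε lam mu : ℝ) (hmu : 0 < mu) (hlam : 0 < lam) (hlameq : lam = ε + mu)
    (hne : ∀ j, j ≠ i → (mu - ρ j ^ 2) ≠ 0)
    (v : Fin T → ℝ)
    (hEig : (ε • P + Q) *ᵥ v = lam • v)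
    (hnorm : v ⬝ᵥ v = 1)
    (hsign : 0 ≤ v ⬝ᵥ u i) :
    1 - 1/lam^2 - 1/(lam^2*mu^2) - ∑ j ∈ Finset.univ.erase i, 1/(lam^2*(mu - ρ j ^2)^2)
      ≤ v ⬝ᵥ u i ∧ v ⬝ᵥ u i ≤ 1 := by
  have hsymP : ∀ x y : Fin T → ℝ, (P *ᵥ x) ⬝ᵥ y = x ⬝ᵥ (P *ᵥ y) := fun x y => by
    rw [dotA, hPt]
  have hsymQ : ∀ x y : Fin T → ℝ, (Q *ᵥ x) ⬝ᵥ y = x ⬝ᵥ (Q *ᵥ y) := fun x y => by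
    rw [dotA, hQt]
  have hPdot : ∀ x : Fin T → ℝ, (P *ᵥ x) ⬝ᵥ (P *ᵥ x) = x ⬝ᵥ (P *ᵥ x) := fun x => by
    rw [hsymP, hPid]
  have hQdot : ∀ x : Fin T → ℝ, (Q *ᵥ x) ⬝ᵥ (Q *ᵥ x) = x ⬝ᵥ (Q *ᵥ x) := fun x => by
    rw [hsymQ, hQid]
  set p := P *ᵥ v with hpdef
  set z := v - p with hzdef
  set e := P *ᵥ (Q *ᵥ z) with hedef
  have hvpz : p + z = v := by rw [hzdef]; abel
  have hEig' : ε • p + Q *ᵥ v = lam • v := by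
    rw [add_mulVec, smul_mulVec] at hEig
    exact hEig
  have hPp : P *ᵥ p = p := by rw [hpdef]; exact hPid v
  have hA : P *ᵥ (Q *ᵥ v) = mu • p := by
    have h := congrArg (fun w => P *ᵥ w) hEig'
    simp only [mulVec_add, mulVec_smul] at h
    rw [hPp, ← hpdef] at h
    have h2 : lam • p = ε • p + mu • p := by rw [hlameq, add_smul]
    rw [h2] at h
    exact add_left_cancel h
  have hlamp : lam • p = ε • p + P *ᵥ (Q *ᵥ v) := by rw [hlameq, add_smul, hA]
  have h1z : lam • z = lam • v - lam • p := by rw [hzdef, smul_sub]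
  have hB : lam • z = Q *ᵥ v - P *ᵥ (Q *ᵥ v) := by
    rw [h1z, ← hEig', hlamp]
    abel
  have hC : mu • p = (∑ j, (ρ j ^ 2 * (u j ⬝ᵥ v)) • u j) + e := by
    have h1 : Q *ᵥ v = Q *ᵥ p + Q *ᵥ z := by rw [← mulVec_add, hvpz]
    have h2 : P *ᵥ (Q *ᵥ v) = P *ᵥ (Q *ᵥ p) + e := by
      rw [h1, mulVec_add, hedef]
    have h3 : P *ᵥ (Q *ᵥ p) = ∑ j, (ρ j ^ 2 * (u j ⬝ᵥ v)) • u j := by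
      rw [hpdef]; exact hPQP v
    rw [← hA, h2, h3]
  have hpu : ∀ k, p ⬝ᵥ u k = u k ⬝ᵥ v := fun k => by
    rw [hpdef, hsymP, hPu, dotProduct_comm]
  -- basic scalar bounds
  have hz2 : lam ^ 2 * (z ⬝ᵥ z) ≤ 1 := by
    have h1 : (lam • z) ⬝ᵥ (lam • z) = lam ^ 2 * (z ⬝ᵥ z) := by
      rw [smul_dotProduct, dotProduct_smul, smul_eq_mul, smul_eq_mul]; ring
    have h2 : (Q *ᵥ v) ⬝ᵥ (Q *ᵥ v) ≤ 1 := by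
      rw [← hnorm]; exact contract_of_dot (hQdot v)
    have h3 : (lam • z) ⬝ᵥ (lam • z) ≤ (Q *ᵥ v) ⬝ᵥ (Q *ᵥ v) := by
      rw [hB]; exact compl_contract _ _ (hPdot _)
    linarith [h1 ▸ h3]
  have hlam2 : (0:ℝ) < lam ^ 2 := by positivity
  have hz2' : z ⬝ᵥ z ≤ 1 / lam ^ 2 := by
    rw [le_div_iff₀ hlam2]
    linarith [hz2]
  have he2 : e ⬝ᵥ e ≤ z ⬝ᵥ z := by
    have h1 : e ⬝ᵥ e ≤ (Q *ᵥ z) ⬝ᵥ (Q *ᵥ z) := by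
      rw [hedef]; exact contract_of_dot (hPdot _)
    have h2 : (Q *ᵥ z) ⬝ᵥ (Q *ᵥ z) ≤ z ⬝ᵥ z := contract_of_dot (hQdot z)
    linarith
  have he2' : e ⬝ᵥ e ≤ 1 / lam ^ 2 := le_trans he2 hz2'
  -- coefficients
  have hck : ∀ k, (mu - ρ k ^ 2) * (u k ⬝ᵥ v) = e ⬝ᵥ u k := fun k => by
    have h := congrArg (fun w => w ⬝ᵥ u k) hC
    simp only [smul_dotProduct, add_dotProduct, smul_eq_mul] at h
    rw [dot_sum_orth u hu (fun j => ρ j ^ 2 * (u j ⬝ᵥ v)) k, hpu k] at h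
    linear_combination h
  have hek : ∀ k, (e ⬝ᵥ u k) ^ 2 ≤ 1 / lam ^ 2 := fun k => by
    have h1 := cs e (u k)
    rw [hu k k, if_pos rfl, mul_one] at h1
    linarith
  have hcj : ∀ j, j ≠ i → (u j ⬝ᵥ v) ^ 2 ≤ 1 / (lam ^ 2 * (mu - ρ j ^ 2) ^ 2) := by
    intro j hj
    have h1 : ((mu - ρ j ^ 2) * (u j ⬝ᵥ v)) ^ 2 ≤ 1 / lam ^ 2 := by
      rw [hck j]; exact hek j
    have h2 : 0 < (mu - ρ j ^ 2) ^ 2 :=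
      lt_of_le_of_ne (sq_nonneg _) (Ne.symm (pow_ne_zero 2 (hne j hj)))
    rw [mul_pow] at h1
    rw [show 1 / (lam ^ 2 * (mu - ρ j ^ 2) ^ 2) = (1 / lam ^ 2) / (mu - ρ j ^ 2) ^ 2 by
      rw [div_div]]
    rw [le_div_iff₀ h2]
    calc (u j ⬝ᵥ v) ^ 2 * (mu - ρ j ^ 2) ^ 2
        = (mu - ρ j ^ 2) ^ 2 * (u j ⬝ᵥ v) ^ 2 := by ring
    _ ≤ 1 / lam ^ 2 := h1
  -- the residual q
  set q := p - ∑ j, (u j ⬝ᵥ v) • u j with hqdef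
  have hpq : p = q + ∑ j, (u j ⬝ᵥ v) • u j := by rw [hqdef]; abel
  have hqu : ∀ k, q ⬝ᵥ u k = 0 := fun k => by
    rw [hqdef, sub_dotProduct, hpu k, dot_sum_orth u hu (fun j => u j ⬝ᵥ v) k, sub_self]
  have hqsum : q ⬝ᵥ (∑ j, (u j ⬝ᵥ v) • u j) = 0 := by
    rw [dotProduct_comm, sum_dot]
    refine Finset.sum_eq_zero fun j _ => ?_
    rw [smul_dotProduct, show u j ⬝ᵥ q = 0 from by rw [dotProduct_comm]; exact hqu j, smul_zero]
  have hqp : q ⬝ᵥ p = q ⬝ᵥ q := by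
    nth_rewrite 1 [hpq]
    rw [dotProduct_add, hqsum, add_zero]
  have hmuq : mu * (q ⬝ᵥ q) = e ⬝ᵥ q := by
    have h := congrArg (fun w => w ⬝ᵥ q) hC
    simp only [smul_dotProduct, add_dotProduct, smul_eq_mul] at h
    rw [sum_dot] at h
    have hzero : ∑ j, ((ρ j ^ 2 * (u j ⬝ᵥ v)) • u j) ⬝ᵥ q = 0 := by
      refine Finset.sum_eq_zero fun j _ => ?_
      rw [smul_dotProduct, show u j ⬝ᵥ q = 0 from by rw [dotProduct_comm]; exact hqu j,
        smul_zero]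
    rw [hzero, zero_add] at h
    rw [show p ⬝ᵥ q = q ⬝ᵥ p from dotProduct_comm _ _, hqp] at h
    exact h
  have hq2 : q ⬝ᵥ q ≤ 1 / (lam ^ 2 * mu ^ 2) := by
    have h1 : (e ⬝ᵥ q) ^ 2 ≤ (1 / lam ^ 2) * (q ⬝ᵥ q) :=
      le_trans (cs e q) (mul_le_mul_of_nonneg_right he2' (dot_self_nonneg q))
    have h2 : (mu * (q ⬝ᵥ q)) ^ 2 ≤ (1 / lam ^ 2) * (q ⬝ᵥ q) := by rw [hmuq]; exact h1
    rcases (dot_self_nonneg q).eq_or_lt with h3 | h3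
    · rw [← h3]; positivity
    · rw [le_div_iff₀ (by positivity)]
      have h4 : lam ^ 2 * mu ^ 2 * (q ⬝ᵥ q) ^ 2 ≤ q ⬝ᵥ q := by
        calc lam ^ 2 * mu ^ 2 * (q ⬝ᵥ q) ^ 2 = lam ^ 2 * ((mu * (q ⬝ᵥ q)) ^ 2) := by ring
        _ ≤ lam ^ 2 * (1 / lam ^ 2 * (q ⬝ᵥ q)) := mul_le_mul_of_nonneg_left h2 hlam2.le
        _ = q ⬝ᵥ q := by field_simp
      have h5 : ((q ⬝ᵥ q) * (lam ^ 2 * mu ^ 2)) * (q ⬝ᵥ q) ≤ 1 * (q ⬝ᵥ q) := by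
        calc ((q ⬝ᵥ q) * (lam ^ 2 * mu ^ 2)) * (q ⬝ᵥ q)
            = lam ^ 2 * mu ^ 2 * (q ⬝ᵥ q) ^ 2 := by ring
        _ ≤ q ⬝ᵥ q := h4
        _ = 1 * (q ⬝ᵥ q) := (one_mul _).symm
      exact le_of_mul_le_mul_right h5 h3
  -- Pythagoras
  have hpz : p ⬝ᵥ z = 0 := by
    have h1 : p ⬝ᵥ p = v ⬝ᵥ p := by
      have := hPdot v
      rw [← hpdef] at this
      exact this
    rw [hzdef, dotProduct_sub, h1, dotProduct_comm, sub_self]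
  have hvv : p ⬝ᵥ p + z ⬝ᵥ z = 1 := by
    have h := hnorm
    rw [← hvpz, add_dotProduct, dotProduct_add, dotProduct_add] at h
    have hzp : z ⬝ᵥ p = 0 := by rw [dotProduct_comm]; exact hpz
    linarith
  have hww : (∑ j, (u j ⬝ᵥ v) • u j) ⬝ᵥ (∑ j, (u j ⬝ᵥ v) • u j) = ∑ j, (u j ⬝ᵥ v) ^ 2 := by
    rw [sum_dot]
    refine Finset.sum_congr rfl fun j _ => ?_
    have hin : u j ⬝ᵥ (∑ k, (u k ⬝ᵥ v) • u k) = u j ⬝ᵥ v := by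
      rw [dotProduct_comm]
      exact dot_sum_orth u hu (fun k => u k ⬝ᵥ v) j
    rw [smul_dotProduct, hin, smul_eq_mul, sq]
  have hsumsq : p ⬝ᵥ p = q ⬝ᵥ q + ∑ j, (u j ⬝ᵥ v) ^ 2 := by
    nth_rewrite 1 [hpq, hpq]
    rw [add_dotProduct, dotProduct_add, dotProduct_add, hqsum, hww]
    have hwq : (∑ j, (u j ⬝ᵥ v) • u j) ⬝ᵥ q = 0 := by rw [dotProduct_comm]; exact hqsum
    linarith [hwq]
  -- split off the i-th term
  have hsplit : ∑ j ∈ Finset.univ.erase i, (u j ⬝ᵥ v) ^ 2 + (u i ⬝ᵥ v) ^ 2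
      = ∑ j, (u j ⬝ᵥ v) ^ 2 := Finset.sum_erase_add _ _ (Finset.mem_univ i)
  have herase : ∑ j ∈ Finset.univ.erase i, (u j ⬝ᵥ v) ^ 2
      ≤ ∑ j ∈ Finset.univ.erase i, 1 / (lam ^ 2 * (mu - ρ j ^ 2) ^ 2) :=
    Finset.sum_le_sum fun j hj => hcj j (Finset.ne_of_mem_erase hj)
  have hq0 : 0 ≤ q ⬝ᵥ q := dot_self_nonneg q
  have hci2 : 1 - 1/lam^2 - 1/(lam^2*mu^2)
      - ∑ j ∈ Finset.univ.erase i, 1/(lam^2*(mu - ρ j ^2)^2) ≤ (u i ⬝ᵥ v) ^ 2 := by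
    linarith [hvv, hsumsq, hz2', hq2, herase, hsplit]
  have hsign' : 0 ≤ u i ⬝ᵥ v := by rw [dotProduct_comm]; exact hsign
  have hcs1 : (u i ⬝ᵥ v) ^ 2 ≤ 1 := by
    have h := cs (u i) v
    rw [hu i i, if_pos rfl, hnorm, one_mul] at h
    exact h
  have ht1 : u i ⬝ᵥ v ≤ 1 := by nlinarith [hsign', hcs1]
  have hcomm : v ⬝ᵥ u i = u i ⬝ᵥ v := dotProduct_comm _ _
  have hprod : 0 ≤ (u i ⬝ᵥ v) * (1 - u i ⬝ᵥ v) := mul_nonneg hsign' (by linarith)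
  have hexp : (u i ⬝ᵥ v) * (1 - u i ⬝ᵥ v) = (u i ⬝ᵥ v) - (u i ⬝ᵥ v) ^ 2 := by ring
  rw [hexp] at hprod
  constructor
  · rw [hcomm]
    linarith [hci2, hprod]
  · rw [hcomm]; exact ht1


lemma vecMulVec_mulVec (w : Fin m → ℝ) (u : Fin n → ℝ) (x : Fin n → ℝ) :
    vecMulVec w u *ᵥ x = (u ⬝ᵥ x) • w := by
  ext i
  simp only [mulVec, vecMulVec_apply, dotProduct, Pi.smul_apply, smul_eq_mul, Finset.sum_mul]
  exact Finset.sum_congr rfl fun j _ => by ring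

lemma vecMulVec_transpose (w : Fin m → ℝ) (u : Fin n → ℝ) :
    (vecMulVec w u)ᵀ = vecMulVec u w := by
  ext i j; simp [vecMulVec_apply, mul_comm]

lemma mulVec_sum {ι : Type*} (A : Matrix (Fin m) (Fin n) ℝ) (s : Finset ι)
    (f : ι → Fin n → ℝ) : A *ᵥ (∑ j ∈ s, f j) = ∑ j ∈ s, A *ᵥ f j := by
  have h := map_sum (Matrix.mulVecLin A) f s
  simp only [mulVecLin_apply] at h
  exact h

lemma sum_mulVec {ι : Type*} (s : Finset ι) (f : ι → Matrix (Fin m) (Fin n) ℝ)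
    (x : Fin n → ℝ) : (∑ j ∈ s, f j) *ᵥ x = ∑ j ∈ s, f j *ᵥ x := by
  induction s using Finset.cons_induction with
  | empty => simp
  | cons j s hj ih => simp [Finset.sum_cons, add_mulVec, ih]

lemma key_pqp (dX dY T r : ℕ) (X : Matrix (Fin dX) (Fin T) ℝ) (Y : Matrix (Fin dY) (Fin T) ℝ)
    (ρ : Fin r → ℝ) (a : Fin r → Fin dX → ℝ) (b : Fin r → Fin dY → ℝ)
    (hb : ∀ i j, b i ⬝ᵥ b j = if i = j then (1:ℝ) else 0)
    (hR : X * Yᵀ = ∑ i : Fin r, ρ i • vecMulVec (a i) (b i))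
    (x : Fin T → ℝ) :
    (Xᵀ * X) *ᵥ ((Yᵀ * Y) *ᵥ ((Xᵀ * X) *ᵥ x))
      = ∑ j, (ρ j ^ 2 * ((Xᵀ *ᵥ a j) ⬝ᵥ x)) • (Xᵀ *ᵥ a j) := by
  have hYXt : Y * Xᵀ = ∑ j : Fin r, ρ j • vecMulVec (b j) (a j) := by
    have : Y * Xᵀ = (X * Yᵀ)ᵀ := by rw [transpose_mul, transpose_transpose]
    rw [this, hR, transpose_sum]
    exact Finset.sum_congr rfl fun j _ => by rw [transpose_smul, vecMulVec_transpose]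
  have hmerge : (Xᵀ * X) *ᵥ ((Yᵀ * Y) *ᵥ ((Xᵀ * X) *ᵥ x))
      = Xᵀ *ᵥ ((X * Yᵀ) *ᵥ ((Y * Xᵀ) *ᵥ (X *ᵥ x))) := by
    simp only [mulVec_mulVec]
    congr 1
    simp only [Matrix.mul_assoc]
  rw [hmerge]
  set w := X *ᵥ x with hw
  have h1 : (Y * Xᵀ) *ᵥ w = ∑ j, (ρ j * (a j ⬝ᵥ w)) • b j := by
    rw [hYXt, sum_mulVec]
    exact Finset.sum_congr rfl fun j _ => by
      rw [smul_mulVec, vecMulVec_mulVec, smul_smul]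
  have h2 : (X * Yᵀ) *ᵥ ((Y * Xᵀ) *ᵥ w) = ∑ k, (ρ k ^ 2 * (a k ⬝ᵥ w)) • a k := by
    rw [h1, hR, sum_mulVec]
    refine Finset.sum_congr rfl fun k _ => ?_
    rw [smul_mulVec, vecMulVec_mulVec]
    have hbk : b k ⬝ᵥ (∑ j, (ρ j * (a j ⬝ᵥ w)) • b j) = ρ k * (a k ⬝ᵥ w) := by
      rw [dotProduct_comm, sum_dot]
      rw [Finset.sum_eq_single k]
      · rw [smul_dotProduct, hb k k]; simp
      · intro j _ hj
        rw [smul_dotProduct, hb j k, if_neg hj, smul_zero]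
      · simp
    rw [hbk, smul_smul]
    rw [show ρ k * (ρ k * (a k ⬝ᵥ w)) = ρ k ^ 2 * (a k ⬝ᵥ w) by ring]
  rw [h2, mulVec_sum]
  refine Finset.sum_congr rfl fun k _ => ?_
  rw [mulVec_smul]
  have hakw : a k ⬝ᵥ w = (Xᵀ *ᵥ a k) ⬝ᵥ x := by
    rw [hw, dotProduct_comm, dotA, dotProduct_comm]
  rw [hakw]


noncomputable def sfun (ρ ε : ℝ) : ℝ := Real.sqrt ((1 - ε) ^ 2 + 4 * ε * ρ ^ 2)

lemma sfun_nonneg (ρ ε : ℝ) : 0 ≤ sfun ρ ε := Real.sqrt_nonneg _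

lemma sfun_sq (ρ : ℝ) {ε : ℝ} (hε : 0 ≤ ε) : sfun ρ ε ^ 2 = (1 - ε) ^ 2 + 4 * ε * ρ ^ 2 :=
  Real.sq_sqrt (by positivity)

lemma sfun_ge (ρ : ℝ) {ε : ℝ} (hε : 0 ≤ ε) : ε - 1 ≤ sfun ρ ε := by
  rcases le_or_gt (ε - 1) 0 with h | h
  · exact h.trans (sfun_nonneg ρ ε)
  · have h2 : (ε - 1) ^ 2 ≤ (1 - ε) ^ 2 + 4 * ε * ρ ^ 2 := by nlinarith
    calc ε - 1 = Real.sqrt ((ε - 1) ^ 2) := (Real.sqrt_sq h.le).symm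
    _ ≤ sfun ρ ε := Real.sqrt_le_sqrt h2

lemma sfun_gt {ρ : ℝ} (hρ : 0 < ρ) {ε : ℝ} (hε : 1 < ε) : ε - 1 < sfun ρ ε := by
  have h2 : (ε - 1) ^ 2 < (1 - ε) ^ 2 + 4 * ε * ρ ^ 2 := by nlinarith
  calc ε - 1 = Real.sqrt ((ε - 1) ^ 2) := (Real.sqrt_sq (by linarith)).symm
  _ < sfun ρ ε := by
      apply Real.sqrt_lt_sqrt (by positivity) h2

/-- `s ε / ε → 1`. -/
lemma tendsto_sfun_div (ρ : ℝ) : Tendsto (fun ε => sfun ρ ε / ε) atTop (nhds 1) := by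
  have h0 : Tendsto (fun ε : ℝ => (1 / ε - 1) ^ 2 + 4 * ρ ^ 2 * (1 / ε)) atTop (nhds 1) := by
    have h1 : Tendsto (fun ε : ℝ => 1 / ε) atTop (nhds 0) := by
      simpa using tendsto_inv_atTop_zero
    have h2 : Tendsto (fun ε : ℝ => (1 / ε - 1) ^ 2 + 4 * ρ ^ 2 * (1 / ε)) atTop
        (nhds ((0 - 1) ^ 2 + 4 * ρ ^ 2 * 0)) := by
      exact (((h1.sub tendsto_const_nhds).pow 2).add (tendsto_const_nhds.mul h1))
    simpa using h2
  have h3 : Tendsto (fun ε => Real.sqrt ((1 / ε - 1) ^ 2 + 4 * ρ ^ 2 * (1 / ε))) atTop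
      (nhds 1) := by simpa using h0.sqrt
  apply h3.congr'
  filter_upwards [eventually_gt_atTop (0 : ℝ)] with ε hε
  have hε2 : (0:ℝ) < ε ^ 2 := by positivity
  rw [sfun]
  rw [show (1 / ε - 1) ^ 2 + 4 * ρ ^ 2 * (1 / ε) = ((1 - ε) ^ 2 + 4 * ε * ρ ^ 2) / ε ^ 2 by
    field_simp]
  rw [Real.sqrt_div (by positivity), Real.sqrt_sq hε.le]


noncomputable def mufun (ρ ε : ℝ) : ℝ := (1 - ε + sfun ρ ε) / 2

lemma mufun_pos {ρ : ℝ} (hρ : 0 < ρ) {ε : ℝ} (hε : 1 < ε) : 0 < mufun ρ ε := by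
  have := sfun_gt hρ hε
  rw [mufun]; linarith

lemma tendsto_mufun {ρ : ℝ} (hρ : 0 < ρ) : Tendsto (mufun ρ) atTop (nhds (ρ ^ 2)) := by
  have hden : Tendsto (fun ε => sfun ρ ε / ε + 1 - 1 / ε) atTop (nhds 2) := by
    have h1 : Tendsto (fun ε : ℝ => 1 / ε) atTop (nhds 0) := by
      simpa using tendsto_inv_atTop_zero
    have := ((tendsto_sfun_div ρ).add (tendsto_const_nhds (x := (1:ℝ)))).sub h1
    norm_num at this
    simpa using this
  have h2 : Tendsto (fun ε => 2 * ρ ^ 2 / (sfun ρ ε / ε + 1 - 1 / ε)) atTop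
      (nhds (2 * ρ ^ 2 / 2)) := tendsto_const_nhds.div hden two_ne_zero
  have h3 : (2 : ℝ) * ρ ^ 2 / 2 = ρ ^ 2 := by ring
  rw [h3] at h2
  apply h2.congr'
  filter_upwards [eventually_gt_atTop (1 : ℝ)] with ε hε
  have hε0 : (0:ℝ) < ε := by linarith
  have hs := sfun_gt hρ hε
  have hden0 : 0 < sfun ρ ε + ε - 1 := by linarith [sfun_nonneg ρ ε]
  have hkey : (1 - ε + sfun ρ ε) * (sfun ρ ε + ε - 1) = 4 * ε * ρ ^ 2 := by
    have := sfun_sq ρ hε0.le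
    nlinarith [this]
  rw [mufun]
  rw [show sfun ρ ε / ε + 1 - 1 / ε = (sfun ρ ε + ε - 1) / ε by field_simp]
  rw [div_div_eq_mul_div, eq_comm, div_eq_div_iff (by norm_num) hden0.ne']
  nlinarith [hkey]


noncomputable def lamfun (ρ ε : ℝ) : ℝ := (1 + ε + sfun ρ ε) / 2

lemma lamfun_eq (ρ ε : ℝ) : lamfun ρ ε = ε + mufun ρ ε := by
  rw [lamfun, mufun]; ring

lemma lamfun_ge (ρ : ℝ) {ε : ℝ} (hε : 0 ≤ ε) : ε ≤ lamfun ρ ε := by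
  have := sfun_ge ρ hε
  rw [lamfun]; linarith

lemma tendsto_lamfun (ρ : ℝ) : Tendsto (lamfun ρ) atTop atTop := by
  refine tendsto_atTop_mono' atTop ?_ tendsto_id
  filter_upwards [eventually_ge_atTop (0:ℝ)] with ε hε using lamfun_ge ρ hε

lemma lamfun_gt {ρ c : ℝ} (hρ : 0 < ρ) (hc : 0 < c) (h : c < ρ ^ 2) :
    ∀ᶠ ε in atTop, c + ε < lamfun ρ ε := by
  filter_upwards [eventually_ge_atTop (1 : ℝ),
    eventually_gt_atTop ((c ^ 2 - c) / (ρ ^ 2 - c))] with ε hε1 hε2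
  have hεc : (c ^ 2 - c) < ε * (ρ ^ 2 - c) := by
    rw [div_lt_iff₀ (by linarith)] at hε2; linarith [hε2]
  have hy : (0:ℝ) ≤ ε - 1 + 2 * c := by linarith
  have hlt : (ε - 1 + 2 * c) ^ 2 < (1 - ε) ^ 2 + 4 * ε * ρ ^ 2 := by nlinarith
  have : ε - 1 + 2 * c < sfun ρ ε := by
    calc ε - 1 + 2 * c = Real.sqrt ((ε - 1 + 2 * c) ^ 2) := (Real.sqrt_sq hy).symm
    _ < sfun ρ ε := Real.sqrt_lt_sqrt (by positivity) hlt
  rw [lamfun]; linarith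

lemma lamfun_le {ρ c : ℝ} (hρ : 0 < ρ) (hc : 0 < c) (h : ρ ^ 2 < c) :
    ∀ᶠ ε in atTop, ¬ c + ε < lamfun ρ ε := by
  filter_upwards [eventually_ge_atTop (1 : ℝ),
    eventually_ge_atTop ((c - c ^ 2) / (c - ρ ^ 2))] with ε hε1 hε2
  have hεc : (c - c ^ 2) ≤ ε * (c - ρ ^ 2) := by
    rw [div_le_iff₀ (by linarith)] at hε2; linarith [hε2]
  have hy : (0:ℝ) ≤ ε - 1 + 2 * c := by linarith
  have hle : (1 - ε) ^ 2 + 4 * ε * ρ ^ 2 ≤ (ε - 1 + 2 * c) ^ 2 := by nlinarith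
  have hs : sfun ρ ε ≤ ε - 1 + 2 * c := by
    calc sfun ρ ε ≤ Real.sqrt ((ε - 1 + 2 * c) ^ 2) := Real.sqrt_le_sqrt hle
    _ = ε - 1 + 2 * c := Real.sqrt_sq hy
  rw [not_lt, lamfun]; linarith


lemma u_orth {dX T : ℕ} (X : Matrix (Fin dX) (Fin T) ℝ) (hXw : X * Xᵀ = 1)
    {r : ℕ} (a : Fin r → Fin dX → ℝ)
    (ha : ∀ i j, a i ⬝ᵥ a j = if i = j then (1:ℝ) else 0) (j k : Fin r) :
    (Xᵀ *ᵥ a j) ⬝ᵥ (Xᵀ *ᵥ a k) = if j = k then (1:ℝ) else 0 := by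
  rw [dotA, transpose_transpose, mulVec_mulVec, hXw, one_mulVec, ha]

lemma inst_ineq
    (dX dY T r : ℕ) (X : Matrix (Fin dX) (Fin T) ℝ) (Y : Matrix (Fin dY) (Fin T) ℝ)
    (hXw : X * Xᵀ = 1) (hYw : Y * Yᵀ = 1)
    (ρ : Fin r → ℝ)
    (a : Fin r → Fin dX → ℝ) (b : Fin r → Fin dY → ℝ)
    (ha : ∀ i j, a i ⬝ᵥ a j = if i = j then (1:ℝ) else 0)
    (hb : ∀ i j, b i ⬝ᵥ b j = if i = j then (1:ℝ) else 0)
    (hR : X * Yᵀ = ∑ i : Fin r, ρ i • vecMulVec (a i) (b i))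
    (i : Fin r) (ε lam mu : ℝ) (hmu : 0 < mu) (hlam : 0 < lam) (hlameq : lam = ε + mu)
    (hne : ∀ j, j ≠ i → (mu - ρ j ^ 2) ≠ 0)
    (v : Fin T → ℝ)
    (hEig : (ε • (Xᵀ * X) + Yᵀ * Y) *ᵥ v = lam • v)
    (hnorm : v ⬝ᵥ v = 1)
    (hsign : 0 ≤ v ⬝ᵥ (Xᵀ *ᵥ a i)) :
    1 - 1/lam^2 - 1/(lam^2*mu^2) - ∑ j ∈ Finset.univ.erase i, 1/(lam^2*(mu - ρ j ^2)^2)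
        ≤ v ⬝ᵥ (Xᵀ *ᵥ a i) ∧ v ⬝ᵥ (Xᵀ *ᵥ a i) ≤ 1 := by
  have hPt : (Xᵀ * X)ᵀ = Xᵀ * X := by rw [transpose_mul, transpose_transpose]
  have hQt : (Yᵀ * Y)ᵀ = Yᵀ * Y := by rw [transpose_mul, transpose_transpose]
  have hPid : ∀ x : Fin T → ℝ, (Xᵀ * X) *ᵥ ((Xᵀ * X) *ᵥ x) = (Xᵀ * X) *ᵥ x := fun x => by
    rw [mulVec_mulVec, show Xᵀ * X * (Xᵀ * X) = Xᵀ * (X * Xᵀ) * X by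
      simp only [Matrix.mul_assoc], hXw, Matrix.mul_one]
  have hQid : ∀ x : Fin T → ℝ, (Yᵀ * Y) *ᵥ ((Yᵀ * Y) *ᵥ x) = (Yᵀ * Y) *ᵥ x := fun x => by
    rw [mulVec_mulVec, show Yᵀ * Y * (Yᵀ * Y) = Yᵀ * (Y * Yᵀ) * Y by
      simp only [Matrix.mul_assoc], hYw, Matrix.mul_one]
  have hPu : ∀ j, (Xᵀ * X) *ᵥ (Xᵀ *ᵥ a j) = Xᵀ *ᵥ a j := fun j => by
    rw [mulVec_mulVec, Matrix.mul_assoc, hXw, Matrix.mul_one]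
  exact abstract_ineq (Xᵀ * X) (Yᵀ * Y) hPt hQt hPid hQid ρ (fun j => Xᵀ *ᵥ a j)
    (u_orth X hXw a ha) hPu (key_pqp dX dY T r X Y ρ a b hb hR) i ε lam mu hmu hlam hlameq
    hne v hEig hnorm hsign

lemma main_tendsto
    (dX dY T r : ℕ) (X : Matrix (Fin dX) (Fin T) ℝ) (Y : Matrix (Fin dY) (Fin T) ℝ)
    (hXw : X * Xᵀ = 1) (hYw : Y * Yᵀ = 1)
    (ρ : Fin r → ℝ) (hρpos : ∀ i, 0 < ρ i) (hρanti : StrictAnti ρ)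
    (a : Fin r → Fin dX → ℝ) (b : Fin r → Fin dY → ℝ)
    (ha : ∀ i j, a i ⬝ᵥ a j = if i = j then (1:ℝ) else 0)
    (hb : ∀ i j, b i ⬝ᵥ b j = if i = j then (1:ℝ) else 0)
    (hR : X * Yᵀ = ∑ i : Fin r, ρ i • vecMulVec (a i) (b i))
    (i : Fin r) (v : ℝ → Fin T → ℝ)
    (hv : ∀ ε : ℝ, 0 < ε →
      (ε • (Xᵀ * X) + Yᵀ * Y) *ᵥ v ε = (ε + mufun (ρ i) ε) • v ε ∧
      v ε ⬝ᵥ v ε = 1 ∧ 0 ≤ v ε ⬝ᵥ (Xᵀ *ᵥ a i)) :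
    Tendsto v atTop (nhds (Xᵀ *ᵥ a i)) := by
  have hρi := hρpos i
  have hmuT : Tendsto (mufun (ρ i)) atTop (nhds (ρ i ^ 2)) := tendsto_mufun hρi
  have hlamT : Tendsto (fun ε => ε + mufun (ρ i) ε) atTop atTop :=
    (tendsto_lamfun (ρ i)).congr (fun ε => lamfun_eq (ρ i) ε)
  have hinv2 : Tendsto (fun ε => 1 / (ε + mufun (ρ i) ε) ^ 2) atTop (nhds 0) := by
    have hsq : Tendsto (fun ε => (ε + mufun (ρ i) ε) ^ 2) atTop atTop :=
      (tendsto_pow_atTop (two_ne_zero)).comp hlamT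
    simpa [one_div, Function.comp_def] using tendsto_inv_atTop_zero.comp hsq
  have hne2 : ∀ j, j ≠ i → ρ i ^ 2 ≠ ρ j ^ 2 := by
    intro j hj
    rcases hj.lt_or_gt with h | h
    · have h2 := hρanti h
      exact ne_of_lt (pow_lt_pow_left₀ h2 (hρpos i).le two_ne_zero)
    · have h2 := hρanti h
      exact ne_of_gt (pow_lt_pow_left₀ h2 (hρpos j).le two_ne_zero)
  -- limit of the lower bound function
  set L : ℝ → ℝ := fun ε => 1 - 1/(ε + mufun (ρ i) ε)^2
      - 1/((ε + mufun (ρ i) ε)^2 * (mufun (ρ i) ε)^2)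
      - ∑ j ∈ Finset.univ.erase i, 1/((ε + mufun (ρ i) ε)^2 * (mufun (ρ i) ε - ρ j ^2)^2)
    with hLdef
  have hL : Tendsto L atTop (nhds 1) := by
    have h2 : Tendsto (fun ε => 1/((ε + mufun (ρ i) ε)^2 * (mufun (ρ i) ε)^2)) atTop
        (nhds 0) := by
      have hm : Tendsto (fun ε => 1/(mufun (ρ i) ε)^2) atTop (nhds (1/(ρ i ^ 2)^2)) := by
        have := (hmuT.pow 2).inv₀ (by positivity)
        simpa [one_div] using this
      have := hinv2.mul hm
      rw [zero_mul] at this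
      refine this.congr fun ε => ?_
      rw [div_mul_div_comm, one_mul]
    have h3 : Tendsto (fun ε => ∑ j ∈ Finset.univ.erase i,
        1/((ε + mufun (ρ i) ε)^2 * (mufun (ρ i) ε - ρ j ^2)^2)) atTop (nhds 0) := by
      have hzero : (0:ℝ) = ∑ j ∈ Finset.univ.erase i, (0:ℝ) := by simp
      rw [hzero]
      refine tendsto_finset_sum _ fun j hj => ?_
      have hjne : j ≠ i := Finset.ne_of_mem_erase hj
      have hdne : (ρ i ^ 2 - ρ j ^ 2) ^ 2 ≠ 0 :=
        pow_ne_zero 2 (sub_ne_zero_of_ne (hne2 j hjne))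
      have hm : Tendsto (fun ε => 1/(mufun (ρ i) ε - ρ j ^2)^2) atTop
          (nhds (1/(ρ i ^ 2 - ρ j ^ 2)^2)) := by
        have := (((hmuT.sub tendsto_const_nhds).pow 2).inv₀ hdne)
        simpa [one_div] using this
      have := hinv2.mul hm
      rw [zero_mul] at this
      refine this.congr fun ε => ?_
      rw [div_mul_div_comm, one_mul]
    have h4 := (((tendsto_const_nhds (x := (1:ℝ)) (f := atTop)).sub hinv2).sub h2).sub h3
    rw [hLdef]
    simpa only [sub_zero] using h4
  -- eventual two-sided bound for t ε = v ε ⬝ᵥ u i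
  have hEvNe : ∀ᶠ ε in atTop, ∀ j, j ≠ i → mufun (ρ i) ε - ρ j ^ 2 ≠ 0 := by
    rw [Filter.eventually_all]
    intro j
    by_cases hj : j = i
    · exact Filter.Eventually.of_forall fun ε h => absurd hj h
    · filter_upwards [hmuT.eventually_ne (hne2 j hj)] with ε hε _
      exact sub_ne_zero_of_ne hε
  have hEv : ∀ᶠ ε in atTop, L ε ≤ v ε ⬝ᵥ (Xᵀ *ᵥ a i) ∧ v ε ⬝ᵥ (Xᵀ *ᵥ a i) ≤ 1 := by
    filter_upwards [eventually_gt_atTop (1:ℝ), hEvNe] with ε hε1 hεne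
    obtain ⟨hEig, hnorm, hsign⟩ := hv ε (by linarith)
    have hmu := mufun_pos hρi hε1
    have hlam : 0 < ε + mufun (ρ i) ε := by linarith
    exact inst_ineq dX dY T r X Y hXw hYw ρ a b ha hb hR i ε (ε + mufun (ρ i) ε)
      (mufun (ρ i) ε) hmu hlam rfl hεne (v ε) hEig hnorm hsign
  have hT : Tendsto (fun ε => v ε ⬝ᵥ (Xᵀ *ᵥ a i)) atTop (nhds 1) :=
    tendsto_of_tendsto_of_tendsto_of_le_of_le' hL tendsto_const_nhds
      (hEv.mono fun ε h => h.1) (hEv.mono fun ε h => h.2)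
  -- coordinatewise convergence
  have huu : (Xᵀ *ᵥ a i) ⬝ᵥ (Xᵀ *ᵥ a i) = 1 := by
    rw [u_orth X hXw a ha i i, if_pos rfl]
  rw [tendsto_pi_nhds]
  intro k
  have hg : Tendsto (fun ε => Real.sqrt (2 - 2 * (v ε ⬝ᵥ (Xᵀ *ᵥ a i)))) atTop (nhds 0) := by
    have h1 : Tendsto (fun ε => 2 - 2 * (v ε ⬝ᵥ (Xᵀ *ᵥ a i))) atTop (nhds (2 - 2 * 1)) :=
      tendsto_const_nhds.sub (hT.const_mul 2)
    have h2 := h1.sqrt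
    norm_num at h2
    exact h2
  have hbd : ∀ᶠ ε in atTop,
      |v ε k - (Xᵀ *ᵥ a i) k| ≤ Real.sqrt (2 - 2 * (v ε ⬝ᵥ (Xᵀ *ᵥ a i))) := by
    filter_upwards [eventually_gt_atTop (0:ℝ)] with ε hε0
    obtain ⟨_, hnorm, _⟩ := hv ε hε0
    have hdiff : (v ε - Xᵀ *ᵥ a i) ⬝ᵥ (v ε - Xᵀ *ᵥ a i)
        = 2 - 2 * (v ε ⬝ᵥ (Xᵀ *ᵥ a i)) := by
      simp only [sub_dotProduct, dotProduct_sub]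
      rw [hnorm, huu, dotProduct_comm (Xᵀ *ᵥ a i) (v ε)]
      ring
    have hsingle : (v ε k - (Xᵀ *ᵥ a i) k) ^ 2
        ≤ (v ε - Xᵀ *ᵥ a i) ⬝ᵥ (v ε - Xᵀ *ᵥ a i) := by
      rw [dotProduct]
      have := Finset.single_le_sum
        (f := fun t => (v ε - Xᵀ *ᵥ a i) t * (v ε - Xᵀ *ᵥ a i) t)
        (fun t _ => mul_self_nonneg _) (Finset.mem_univ k)
      simpa [sq, Pi.sub_apply] using this
    calc |v ε k - (Xᵀ *ᵥ a i) k| = Real.sqrt ((v ε k - (Xᵀ *ᵥ a i) k) ^ 2) :=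
          (Real.sqrt_sq_eq_abs _).symm
    _ ≤ Real.sqrt ((v ε - Xᵀ *ᵥ a i) ⬝ᵥ (v ε - Xᵀ *ᵥ a i)) := Real.sqrt_le_sqrt hsingle
    _ = Real.sqrt (2 - 2 * (v ε ⬝ᵥ (Xᵀ *ᵥ a i))) := by rw [hdiff]
  have hgneg : Tendsto (fun ε => -Real.sqrt (2 - 2 * (v ε ⬝ᵥ (Xᵀ *ᵥ a i)))) atTop (nhds 0) := by
    simpa using hg.neg
  have hzero : Tendsto (fun ε => v ε k - (Xᵀ *ᵥ a i) k) atTop (nhds 0) := by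
    refine tendsto_of_tendsto_of_tendsto_of_le_of_le' hgneg hg ?_ ?_
    · filter_upwards [hbd] with ε h using neg_le_of_abs_le h
    · filter_upwards [hbd] with ε h using le_of_abs_le h
  have := hzero.add (tendsto_const_nhds (x := (Xᵀ *ᵥ a i) k))
  rw [zero_add] at this
  refine this.congr fun ε => ?_
  ring

end CCPC

/-- **The ε → ∞ limit of the CCPC solution is given by CCA directions.**
Let `X`, `Y` be whitened (`XXᵀ = I`, `YYᵀ = I`), `c > 0`, and let `R = XYᵀ` have simple
nonzero singular values `ρ_1 > … > ρ_r > 0` with `ρ_i² ≠ c`, left singular vectors `a_i`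
and right singular vectors `b_i`.  For `ε > 0` let
`λ_i⁺(ε) = (1+ε+√((1−ε)²+4ερ_i²))/2` and let `v_i(ε)` be an associated unit right singular
vector of `Ξ = [√ε X ; Y]` with sign chosen so that `⟨v_i(ε), Xᵀ a_i⟩ ≥ 0`.  Then, as
`ε → ∞`: (i) `λ_i⁺(ε) > c + ε` holds eventually if `ρ_i² > c` and fails eventually if
`ρ_i² < c`; (ii) `v_i(ε) → Xᵀ a_i`, the `i`-th canonical-correlation score of `X`. -/
theorem ccpc_limit_eps_to_infty_cca
    (dX dY T : ℕ) (X : Matrix (Fin dX) (Fin T) ℝ) (Y : Matrix (Fin dY) (Fin T) ℝ)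
    (hXw : X * Xᵀ = 1) (hYw : Y * Yᵀ = 1)
    (c : ℝ) (hc : 0 < c)
    -- SVD of the cross-covariance `R = XYᵀ`: simple nonzero singular values `ρ_i`
    (r : ℕ) (ρ : Fin r → ℝ) (hρpos : ∀ i, 0 < ρ i) (hρanti : StrictAnti ρ)
    (hρc : ∀ i, ρ i ^ 2 ≠ c)
    (a : Fin r → Fin dX → ℝ) (b : Fin r → Fin dY → ℝ)
    (ha : ∀ i j, a i ⬝ᵥ a j = if i = j then (1 : ℝ) else 0)
    (hb : ∀ i j, b i ⬝ᵥ b j = if i = j then (1 : ℝ) else 0)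
    (hR : X * Yᵀ = ∑ i : Fin r, ρ i • vecMulVec (a i) (b i))
    -- the eigenvalue branch `λ_i⁺(ε)` of `ΞΞᵀ`
    (lamPlus : Fin r → ℝ → ℝ)
    (hlamPlus : ∀ i ε, lamPlus i ε = (1 + ε + Real.sqrt ((1 - ε) ^ 2 + 4 * ε * ρ i ^ 2)) / 2)
    -- `v i ε` is a unit right singular vector of `Ξ(ε) = [√ε X ; Y]` for `λ_i⁺(ε)`,
    -- with sign chosen so that `⟨v_i(ε), Xᵀ a_i⟩ ≥ 0`
    (v : Fin r → ℝ → Fin T → ℝ)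
    (hv : ∀ i ε, 0 < ε →
      ((fromRows (Real.sqrt ε • X) Y)ᵀ * fromRows (Real.sqrt ε • X) Y) *ᵥ v i ε
          = lamPlus i ε • v i ε ∧
      v i ε ⬝ᵥ v i ε = 1 ∧
      0 ≤ v i ε ⬝ᵥ (Xᵀ *ᵥ a i)) :
    (∀ i : Fin r,
      (c < ρ i ^ 2 → ∀ᶠ ε in atTop, c + ε < lamPlus i ε) ∧
      (ρ i ^ 2 < c → ∀ᶠ ε in atTop, ¬ c + ε < lamPlus i ε)) ∧
    (∀ i : Fin r, Tendsto (v i) atTop (nhds (Xᵀ *ᵥ a i))) := by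
  have hlamfun : ∀ i ε, lamPlus i ε = CCPC.lamfun (ρ i) ε := by
    intro i ε
    rw [hlamPlus]
    rfl
  constructor
  · intro i
    constructor
    · intro h
      filter_upwards [CCPC.lamfun_gt (hρpos i) hc h] with ε hε
      rw [hlamfun]
      exact hε
    · intro h
      filter_upwards [CCPC.lamfun_le (hρpos i) hc h] with ε hε
      rw [hlamfun]
      exact hε
  · intro i
    have hconv : ∀ ε : ℝ, 0 < ε →
        (fromRows (Real.sqrt ε • X) Y)ᵀ * fromRows (Real.sqrt ε • X) Y
          = ε • (Xᵀ * X) + Yᵀ * Y := by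
      intro ε hε
      rw [transpose_fromRows, fromCols_mul_fromRows, transpose_smul,
        Matrix.smul_mul, Matrix.mul_smul, smul_smul, Real.mul_self_sqrt hε.le]
    refine CCPC.main_tendsto dX dY T r X Y hXw hYw ρ hρpos hρanti a b ha hb hR i (v i) ?_
    intro ε hε
    obtain ⟨h1, h2, h3⟩ := hv i ε hε
    refine ⟨?_, h2, h3⟩
    rw [hconv ε hε] at h1
    rw [← CCPC.lamfun_eq (ρ i) ε, ← hlamfun i ε]
    exact h1
end

section
/- Let X ∈ ℝ^{d_X×T} with XX^⊤ invertible, Y ∈ ℝ^{d_Y×T}, Z ∈ ℝ^{d×T}, and ε, c, T > 0. Then min over W_b ∈ ℝ^{d×d_X} of ε‖Z − W_bX‖_F² plus min over W_a ∈ ℝ^{d_Y×d} of (T·tr[W_a^⊤W_a] − 2·tr[Y^⊤W_aZ]) plus c‖Z‖_F² equals tr[(c+ε)Z^⊤Z − Z^⊤Z(εX^⊤(XX^⊤)^{-1}X + (1/T)Y^⊤Y)]. -/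
open Matrix

/-- Squared Frobenius norm `‖M‖_F² = tr (Mᵀ M)`. -/
noncomputable def frobSq {m n : ℕ} (M : Matrix (Fin m) (Fin n) ℝ) : ℝ :=
  Matrix.trace (Mᵀ * M)

lemma frobSq_nonneg {m n : ℕ} (M : Matrix (Fin m) (Fin n) ℝ) : 0 ≤ frobSq M := by
  unfold frobSq
  rw [Matrix.trace]
  apply Finset.sum_nonneg
  intro j _
  simp only [Matrix.diag_apply, Matrix.mul_apply, Matrix.transpose_apply]
  exact Finset.sum_nonneg fun i _ => mul_self_nonneg _

lemma trace_tmul_symm {m n : ℕ} (A B : Matrix (Fin m) (Fin n) ℝ) :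
    Matrix.trace (Aᵀ * B) = Matrix.trace (Bᵀ * A) := by
  rw [← Matrix.trace_transpose (Aᵀ * B), Matrix.transpose_mul, Matrix.transpose_transpose]

lemma frobSq_sub {m n : ℕ} (A B : Matrix (Fin m) (Fin n) ℝ) :
    frobSq (A - B) = frobSq A - 2 * Matrix.trace (Aᵀ * B) + frobSq B := by
  unfold frobSq
  rw [Matrix.transpose_sub, Matrix.sub_mul, Matrix.mul_sub, Matrix.mul_sub,
    Matrix.trace_sub, Matrix.trace_sub, Matrix.trace_sub, trace_tmul_symm B A]
  ring

lemma frobSq_add {m n : ℕ} (A B : Matrix (Fin m) (Fin n) ℝ) :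
    frobSq (A + B) = frobSq A + 2 * Matrix.trace (Aᵀ * B) + frobSq B := by
  have hn : frobSq (-B) = frobSq B := by
    unfold frobSq; simp [Matrix.transpose_neg, Matrix.neg_mul, Matrix.mul_neg]
  have := frobSq_sub A (-B)
  simpa [sub_neg_eq_add, Matrix.mul_neg, Matrix.neg_mul, hn] using this

/-- **Reduction of the per-layer CCPC loss to a trace objective in `Z` alone.**
For `X` with `XXᵀ` invertible, `Y`, `Z`, and `ε, c, T > 0`:
`min_{W_b} ε‖Z − W_bX‖_F² + min_{W_a} (T·tr[W_aᵀW_a] − 2·tr[YᵀW_aZ]) + c‖Z‖_F²`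
`  = tr[(c+ε)ZᵀZ − ZᵀZ(εXᵀ(XXᵀ)⁻¹X + (1/T)YᵀY)]`. -/
theorem ccpc_per_layer_reduction
    (dX dY d T : ℕ) (hT : 0 < T)
    (X : Matrix (Fin dX) (Fin T) ℝ) (Y : Matrix (Fin dY) (Fin T) ℝ)
    (Z : Matrix (Fin d) (Fin T) ℝ)
    (ε c : ℝ) (hε : 0 < ε) (hc : 0 < c)
    (hX : IsUnit (X * Xᵀ).det) :
    ∃ m₁ m₂ : ℝ,
      IsLeast { r : ℝ | ∃ Wb : Matrix (Fin d) (Fin dX) ℝ,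
          r = ε * frobSq (Z - Wb * X) } m₁ ∧
      IsLeast { r : ℝ | ∃ Wa : Matrix (Fin dY) (Fin d) ℝ,
          r = (T : ℝ) * Matrix.trace (Waᵀ * Wa) - 2 * Matrix.trace (Yᵀ * Wa * Z) } m₂ ∧
      m₁ + m₂ + c * frobSq Z
        = Matrix.trace ((c + ε) • (Zᵀ * Z)
            - Zᵀ * Z * (ε • (Xᵀ * (X * Xᵀ)⁻¹ * X) + ((T : ℝ))⁻¹ • (Yᵀ * Y))) := by
  have hTR : (0:ℝ) < (T:ℝ) := by exact_mod_cast hT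
  have hTne : (T:ℝ) ≠ 0 := ne_of_gt hTR
  set Q : Matrix (Fin dX) (Fin dX) ℝ := X * Xᵀ with hQ
  have hQi : Q⁻¹ * Q = 1 := Matrix.nonsing_inv_mul Q hX
  have hQs : Q⁻¹ᵀ = Q⁻¹ := by
    rw [Matrix.transpose_nonsing_inv]
    congr 1
    rw [hQ, Matrix.transpose_mul, Matrix.transpose_transpose]
  set W0 : Matrix (Fin d) (Fin dX) ℝ := Z * Xᵀ * Q⁻¹ with hW0
  set Wa0 : Matrix (Fin dY) (Fin d) ℝ := (T : ℝ)⁻¹ • (Y * Zᵀ) with hWa0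
  -- key orthogonality
  have key : (Z - W0 * X) * Xᵀ = 0 := by
    rw [Matrix.sub_mul]
    have h : W0 * X * Xᵀ = Z * Xᵀ := by
      rw [hW0, Matrix.mul_assoc (Z * Xᵀ * Q⁻¹) X Xᵀ, Matrix.mul_assoc (Z * Xᵀ) Q⁻¹ (X * Xᵀ),
        ← hQ, hQi, Matrix.mul_one]
    rw [h, sub_self]
  have key' : X * (Z - W0 * X)ᵀ = 0 := by
    have := congrArg Matrix.transpose key
    simpa [Matrix.transpose_mul] using this
  -- general cross-term identity for the apical problem
  have hcrG : ∀ W : Matrix (Fin dY) (Fin d) ℝ,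
      Matrix.trace (Wᵀ * Wa0) = (T:ℝ)⁻¹ * Matrix.trace (Yᵀ * W * Z) := by
    intro W
    rw [hWa0, Matrix.mul_smul, Matrix.trace_smul, smul_eq_mul,
      Matrix.trace_mul_cycle Yᵀ W Z]
    congr 1
    rw [trace_tmul_symm, Matrix.transpose_mul, Matrix.transpose_transpose]
  -- value identities
  have e1 : Zᵀ * (W0 * X) = Zᵀ * Z * (Xᵀ * Q⁻¹ * X) := by
    rw [hW0]; simp only [Matrix.mul_assoc]
  have e0 : Matrix.trace ((W0 * X)ᵀ * (Z - W0 * X)) = 0 := by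
    rw [Matrix.transpose_mul, Matrix.mul_assoc, Matrix.trace_mul_comm, Matrix.mul_assoc,
      key, Matrix.mul_zero, Matrix.trace_zero]
  have e2 : frobSq (W0 * X) = Matrix.trace (Zᵀ * Z * (Xᵀ * Q⁻¹ * X)) := by
    unfold frobSq
    have hsplit : Matrix.trace ((W0 * X)ᵀ * (W0 * X))
        = Matrix.trace ((W0 * X)ᵀ * Z) - Matrix.trace ((W0 * X)ᵀ * (Z - W0 * X)) := by
      rw [Matrix.mul_sub, Matrix.trace_sub]; ring
    rw [hsplit, e0, sub_zero, trace_tmul_symm, e1]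
  have h1 : frobSq (Z - W0 * X)
      = Matrix.trace (Zᵀ * Z) - Matrix.trace (Zᵀ * Z * (Xᵀ * Q⁻¹ * X)) := by
    rw [frobSq_sub, e1, e2]
    have hfz : frobSq Z = Matrix.trace (Zᵀ * Z) := rfl
    rw [hfz]; ring
  have hy : Matrix.trace (Yᵀ * (Y * Zᵀ) * Z) = Matrix.trace (Zᵀ * Z * (Yᵀ * Y)) := by
    rw [← Matrix.mul_assoc Yᵀ Y Zᵀ, Matrix.mul_assoc (Yᵀ * Y) Zᵀ Z, Matrix.trace_mul_comm]
  have htr0 : Matrix.trace (Yᵀ * Wa0 * Z)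
      = (T:ℝ)⁻¹ * Matrix.trace (Zᵀ * Z * (Yᵀ * Y)) := by
    rw [hWa0, Matrix.mul_smul, Matrix.smul_mul, Matrix.trace_smul, smul_eq_mul, hy]
  have h00 : Matrix.trace (Wa0ᵀ * Wa0)
      = (T:ℝ)⁻¹ * ((T:ℝ)⁻¹ * Matrix.trace (Zᵀ * Z * (Yᵀ * Y))) := by
    rw [hcrG Wa0, htr0]
  refine ⟨ε * frobSq (Z - W0 * X),
    (T : ℝ) * Matrix.trace (Wa0ᵀ * Wa0) - 2 * Matrix.trace (Yᵀ * Wa0 * Z), ?_, ?_, ?_⟩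
  · constructor
    · exact ⟨W0, rfl⟩
    · rintro r ⟨Wb, rfl⟩
      have hdec : Z - Wb * X = (Z - W0 * X) + (W0 - Wb) * X := by
        rw [Matrix.sub_mul]; abel
      have hcross : Matrix.trace ((Z - W0 * X)ᵀ * ((W0 - Wb) * X)) = 0 := by
        rw [Matrix.trace_mul_comm, Matrix.mul_assoc, key', Matrix.mul_zero, Matrix.trace_zero]
      have hE := frobSq_add (Z - W0 * X) ((W0 - Wb) * X)
      rw [← hdec, hcross] at hE
      nlinarith [frobSq_nonneg ((W0 - Wb) * X), hε.le]
  · constructor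
    · exact ⟨Wa0, rfl⟩
    · rintro r ⟨Wa, rfl⟩
      have hexp := frobSq_sub Wa Wa0
      have hnn := frobSq_nonneg (Wa - Wa0)
      have hfa : frobSq Wa = Matrix.trace (Waᵀ * Wa) := rfl
      have hfa0 : frobSq Wa0 = Matrix.trace (Wa0ᵀ * Wa0) := rfl
      have h0 : Matrix.trace (Yᵀ * Wa0 * Z) = (T:ℝ) * Matrix.trace (Wa0ᵀ * Wa0) := by
        rw [hcrG Wa0]; field_simp
      have heq : (T:ℝ) * Matrix.trace (Waᵀ * Wa) - 2 * Matrix.trace (Yᵀ * Wa * Z)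
          - ((T:ℝ) * Matrix.trace (Wa0ᵀ * Wa0) - 2 * Matrix.trace (Yᵀ * Wa0 * Z))
          = (T:ℝ) * frobSq (Wa - Wa0) := by
        rw [h0, hexp, hcrG Wa, hfa, hfa0]; field_simp; ring
      nlinarith [mul_nonneg hTR.le hnn, heq]
  · have hfz : frobSq Z = Matrix.trace (Zᵀ * Z) := rfl
    rw [h1, h00, htr0, hfz, Matrix.trace_sub, Matrix.trace_smul, Matrix.mul_add,
      Matrix.trace_add, Matrix.mul_smul, Matrix.mul_smul, Matrix.trace_smul,
      Matrix.trace_smul, smul_eq_mul, smul_eq_mul, smul_eq_mul]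
    field_simp
    ring
end

section
/- Consider an (n+1)-layer linear network with fixed matrices W_b^{(l)} ∈ ℝ^{d_{l+1}×d_l}, W_a^{(l)} ∈ ℝ^{d_{l+1}×d_l}, Q^{(l)} ∈ ℝ^{k_l×d_l}, conductances g_b, g_a > 0 with ε = g_a/g_b, input z^{(0)} ∈ ℝ^{d_0}, output z^{(n)} = y ∈ ℝ^{d_n}, and suppose z^{(1)}, …, z^{(n-1)} satisfy the equilibrium equations g_b W_b^{(l-1)}z^{(l-1)} + g_a W_a^{(l)⊤}z^{(l+1)} − g_b z^{(l)} − g_a Q^{(l)⊤}Q^{(l)}z^{(l)} = 0 for l = 1, …, n−1. Define F^{(l)} = (I + εQ^{(l)⊤}Q^{(l)})^{-1}, B_1 = F^{(n-1)}, A_1 = I, and recursively A_{k+1} = W_a^{(n-k-1)⊤}B_kA_k and B_{k+1} = (I − εF^{(n-k-1)}W_a^{(n-k-1)⊤}B_kW_b^{(n-k-1)})^{-1}F^{(n-k-1)}, assuming all indicated inverses exist. Then for every k = 1, …, n−1: z^{(n-k)} = B_k(W_b^{(n-k-1)}z^{(n-k-1)} + ε^k A_k W_a^{(n-1)⊤}y).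 -/
open Matrix

/-- **Equilibrium solution of the BioCCPC neural dynamics.**
Consider an `(n+1)`-layer linear network (`n = m + 1`) with fixed weights
`W_b^{(l)}, W_a^{(l)} ∈ ℝ^{d_{l+1}×d_l}`, interneuron weights `Q^{(l)} ∈ ℝ^{k_l×d_l}`,
conductances `g_b, g_a > 0` with `ε = g_a/g_b`, input `z^{(0)}`, output `z^{(n)} = y`, and
hidden activities satisfying the equilibrium equations
`g_b W_b^{(l-1)}z^{(l-1)} + g_a W_a^{(l)ᵀ}z^{(l+1)} − g_b z^{(l)} − g_a Q^{(l)ᵀ}Q^{(l)}z^{(l)} = 0`.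
With `F^{(l)} = (I + εQ^{(l)ᵀ}Q^{(l)})⁻¹` and the recursively defined matrices `B`, `A`
(indexed here by layer: `B_{n-1} = F^{(n-1)}`, `A_{n-1} = I`,
`A_l = W_a^{(l)ᵀ}B_{l+1}A_{l+1}`, `B_l = (I − εF^{(l)}W_a^{(l)ᵀ}B_{l+1}W_b^{(l)})⁻¹F^{(l)}`),
assuming all indicated inverses exist, every hidden layer satisfies
`z^{(l)} = B_l (W_b^{(l-1)}z^{(l-1)} + ε^{n-l} A_l W_a^{(n-1)ᵀ} y)`. -/
theorem bioccpc_equilibrium_recursion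
    (m : ℕ) (hm : 1 ≤ m) (d kk : ℕ → ℕ)
    (Wb Wa : (l : ℕ) → Matrix (Fin (d (l + 1))) (Fin (d l)) ℝ)
    (Q : (l : ℕ) → Matrix (Fin (kk l)) (Fin (d l)) ℝ)
    (ga gb ε : ℝ) (hga : 0 < ga) (hgb : 0 < gb) (hε : ε = ga / gb)
    (z : (l : ℕ) → Fin (d l) → ℝ)
    -- equilibrium of the neural dynamics at every hidden layer `l + 1 ∈ {1, …, m}`
    (hequil : ∀ l, l < m →
      gb • (Wb l *ᵥ z l) + ga • ((Wa (l + 1))ᵀ *ᵥ z (l + 2))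
        - gb • z (l + 1) - ga • ((Q (l + 1))ᵀ *ᵥ (Q (l + 1) *ᵥ z (l + 1))) = 0)
    -- `F^{(l)} = (I + ε Q^{(l)ᵀ}Q^{(l)})⁻¹`
    (F : (l : ℕ) → Matrix (Fin (d l)) (Fin (d l)) ℝ)
    (hF : ∀ l, F l = (1 + ε • ((Q l)ᵀ * Q l))⁻¹)
    -- `B` and `A`, indexed by layer (`B_l` and `A_l` correspond to `B_k`, `A_k` with `k = n - l`)
    (B : (l : ℕ) → Matrix (Fin (d l)) (Fin (d l)) ℝ)
    (A : (l : ℕ) → Matrix (Fin (d l)) (Fin (d m)) ℝ)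
    (hBtop : B m = F m) (hAtop : A m = 1)
    (hArec : ∀ l, 1 ≤ l → l < m → A l = (Wa l)ᵀ * B (l + 1) * A (l + 1))
    (hBrec : ∀ l, 1 ≤ l → l < m →
      B l = (1 - ε • (F l * (Wa l)ᵀ * B (l + 1) * Wb l))⁻¹ * F l)
    -- all indicated inverses exist
    (hFinv : ∀ l, 1 ≤ l → l ≤ m → IsUnit (1 + ε • ((Q l)ᵀ * Q l)).det)
    (hBinv : ∀ l, 1 ≤ l → l < m →
      IsUnit (1 - ε • (F l * (Wa l)ᵀ * B (l + 1) * Wb l)).det) :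
    ∀ l, l < m →
      z (l + 1) = B (l + 1) *ᵥ
        (Wb l *ᵥ z l + ε ^ (m - l) • (A (l + 1) *ᵥ ((Wa m)ᵀ *ᵥ z (m + 1)))) := by
  have hgb' : gb ≠ 0 := ne_of_gt hgb
  -- Step 1: pointwise equilibrium rewritten through F
  have hstep : ∀ l, l < m → z (l + 1) =
      F (l + 1) *ᵥ (Wb l *ᵥ z l + ε • ((Wa (l + 1))ᵀ *ᵥ z (l + 2))) := by
    intro l hl
    have he := hequil l hl
    have h2 : (1 + ε • ((Q (l+1))ᵀ * Q (l+1))) *ᵥ z (l+1)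
        = Wb l *ᵥ z l + ε • ((Wa (l+1))ᵀ *ᵥ z (l+2)) := by
      rw [Matrix.mulVec_mulVec] at he
      rw [Matrix.add_mulVec, Matrix.one_mulVec, Matrix.smul_mulVec]
      funext i
      have hei := congrFun he i
      simp only [Pi.add_apply, Pi.sub_apply, Pi.smul_apply, smul_eq_mul,
        Pi.zero_apply] at hei
      simp only [Pi.add_apply, Pi.smul_apply, smul_eq_mul]
      rw [hε]
      field_simp
      linarith
    have hFi := hFinv (l+1) (by omega) (by omega)
    rw [← h2, Matrix.mulVec_mulVec, hF, Matrix.nonsing_inv_mul _ hFi,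
      Matrix.one_mulVec]
  -- Step 2: descending induction
  have main : ∀ k l, l < m → m - l = k + 1 →
      z (l + 1) = B (l + 1) *ᵥ
        (Wb l *ᵥ z l + ε ^ (m - l) • (A (l + 1) *ᵥ ((Wa m)ᵀ *ᵥ z (m + 1)))) := by
    intro k
    induction k with
    | zero =>
      intro l hl hml
      obtain rfl : m = l + 1 := by omega
      have h1 : l + 1 - l = 1 := by omega
      rw [h1, pow_one, hBtop, hAtop, Matrix.one_mulVec]
      exact hstep l hl
    | succ k ih =>
      intro l hl hml
      have hl1 : l + 1 < m := by omega
      have ihz := ih (l + 1) hl1 (by omega)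
      have hz := hstep l hl
      rw [ihz] at hz
      have hpow : ε ^ (m - l) = ε * ε ^ (m - (l + 1)) := by
        rw [← pow_succ']; congr 1; omega
      have key : (1 - ε • (F (l+1) * (Wa (l+1))ᵀ * B (l+2) * Wb (l+1))) *ᵥ z (l + 1)
          = F (l + 1) *ᵥ (Wb l *ᵥ z l
              + ε ^ (m - l) • (A (l + 1) *ᵥ ((Wa m)ᵀ *ᵥ z (m + 1)))) := by
        rw [hArec (l+1) (by omega) hl1, hpow]
        rw [Matrix.sub_mulVec, Matrix.one_mulVec, Matrix.smul_mulVec]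
        nth_rewrite 1 [hz]
        simp only [Matrix.mulVec_add, Matrix.mulVec_smul, Matrix.mulVec_mulVec,
          Matrix.mul_assoc]
        module
      have hBl := hBrec (l+1) (by omega) hl1
      rw [hBl, ← Matrix.mulVec_mulVec, ← key, Matrix.mulVec_mulVec,
        Matrix.nonsing_inv_mul _ (hBinv (l+1) (by omega) hl1), Matrix.one_mulVec]
  intro l hl
  exact main (m - l - 1) l hl (by omega)
end

section
/- In the setting of the equilibrium recursion z^{(n-k)} = B_k(W_b^{(n-k-1)}z^{(n-k-1)} + ε^k A_k W_a^{(n-1)⊤}y) with fixed (ε-independent) matrices W_a^{(l)}, W_b^{(l)}, Q^{(l)}, the equilibrium solution z^{(l)}(ε) is well-defined and analytic in ε on a neighborhood of ε = 0, and there exist matrix-valued polynomials C_1^{(l)}(ε) and C_2^{(l)}(ε) in ε of degree at most n−l−1, independent of y (namely the degree-(n−l−1) Taylor truncations of B_{n-l}W_b^{(l-1)} and of B_{n-l-1}W_b^{(l)}B_{n-l}W_b^{(l-1)} respectively), such that as ε → 0⁺: z^{(l)}(ε) = C_1^{(l)}(ε)z^{(l-1)}(ε) + O(ε^{n-l}) and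 z^{(l+1)}(ε) = C_2^{(l)}(ε)z^{(l-1)}(ε) + ε^{n-l-1}W_a^{(l+1)⊤}⋯W_a^{(n-1)⊤}y + O(ε^{n-l}), where the implicit constants in the O(·) bounds depend on the fixed matrices, on ‖z^{(0)}‖ and on ‖y‖ only. -/
open Matrix

open Filter

/-- Entrywise analyticity implies analyticity of the determinant. -/
lemma analyticAt_det' {n : Type*} [Fintype n] [DecidableEq n] {M : ℝ → Matrix n n ℝ}
    (h : ∀ i j, AnalyticAt ℝ (fun ε => M ε i j) 0) :
    AnalyticAt ℝ (fun ε => (M ε).det) 0 := by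
  simp only [Matrix.det_apply]
  apply Finset.analyticAt_fun_sum
  intro σ _
  have : AnalyticAt ℝ (fun ε => ∏ i, M ε (σ i) i) 0 :=
    Finset.analyticAt_fun_prod _ (fun i _ => h (σ i) i)
  have h2 : (fun z => Equiv.Perm.sign σ • ∏ i, M z (σ i) i)
      = fun z => ((Equiv.Perm.sign σ : ℤ) : ℝ) * ∏ i, M z (σ i) i := by
    funext z; simp [Units.smul_def, zsmul_eq_mul]
  rw [h2]
  exact analyticAt_const.mul this

lemma analyticAt_inv_entry {n : Type*} [Fintype n] [DecidableEq n] {M : ℝ → Matrix n n ℝ}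
    (h : ∀ i j, AnalyticAt ℝ (fun ε => M ε i j) 0) (h0 : (M 0).det ≠ 0) (i j : n) :
    AnalyticAt ℝ (fun ε => (M ε)⁻¹ i j) 0 := by
  have hdet : AnalyticAt ℝ (fun ε => (M ε).det) 0 := analyticAt_det' h
  have hadj : AnalyticAt ℝ (fun ε => (M ε).adjugate i j) 0 := by
    simp only [Matrix.adjugate_apply]
    apply analyticAt_det'
    intro a b
    simp only [Matrix.updateRow_apply]
    by_cases hab : a = j
    · simpa [hab] using analyticAt_const
    · simpa [hab] using h a b
  have : ∀ ε : ℝ, (M ε)⁻¹ i j = ((M ε).det)⁻¹ * (M ε).adjugate i j := by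
    intro ε
    rw [Matrix.inv_def, Ring.inverse_eq_inv', Matrix.smul_apply, smul_eq_mul]
  simp only [this]
  exact (hdet.inv h0).mul hadj

/-- Taylor truncation with remainder bound for a scalar analytic function at `0`. -/
lemma taylor_trunc {f : ℝ → ℝ} (hf : AnalyticAt ℝ f 0) (n : ℕ) :
    ∃ p : Polynomial ℝ, p.natDegree ≤ n ∧ p.coeff 0 = f 0 ∧
      ∃ C : ℝ, 0 ≤ C ∧ ∀ᶠ ε in nhds (0:ℝ), |f ε - p.eval ε| ≤ C * |ε| ^ (n + 1) := by
  obtain ⟨q, hq⟩ := hf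
  refine ⟨∑ k ∈ Finset.range (n+1), Polynomial.C (q.coeff k) * Polynomial.X ^ k, ?_, ?_, ?_⟩
  · refine Polynomial.natDegree_sum_le_of_forall_le _ _ (fun k hk => ?_)
    exact le_trans (Polynomial.natDegree_C_mul_X_pow_le _ _) (Nat.lt_succ_iff.mp (Finset.mem_range.mp hk))
  · have h0 : q.coeff 0 = f 0 := hq.coeff_zero (fun _ => 1)
    simp [Polynomial.finset_sum_coeff, Polynomial.coeff_C_mul, Polynomial.coeff_X_pow, h0]
  · have hev : ∀ ε : ℝ, Polynomial.eval ε (∑ k ∈ Finset.range (n+1),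
        Polynomial.C (q.coeff k) * Polynomial.X ^ k) = q.partialSum (n+1) ε := by
      intro ε
      rw [Polynomial.eval_finset_sum]
      simp only [FormalMultilinearSeries.partialSum,
        FormalMultilinearSeries.apply_eq_pow_smul_coeff, smul_eq_mul,
        Polynomial.eval_mul, Polynomial.eval_C, Polynomial.eval_pow, Polynomial.eval_X]
      exact Finset.sum_congr rfl fun k _ => mul_comm _ _
    have hO := hq.isBigO_sub_partialSum_pow (n+1)
    rw [Asymptotics.isBigO_iff] at hO
    obtain ⟨C, hC⟩ := hO
    refine ⟨|C|, abs_nonneg _, ?_⟩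
    filter_upwards [hC] with ε hε
    rw [hev]
    have := hε
    simp only [zero_add, Real.norm_eq_abs, abs_pow, abs_abs] at this
    calc |f ε - q.partialSum (n+1) ε| ≤ C * |ε| ^ (n+1) := this
      _ ≤ |C| * |ε| ^ (n+1) := by
          have : (0:ℝ) ≤ |ε| ^ (n+1) := by positivity
          nlinarith [le_abs_self C]

lemma norm_mulVec_le' {a b : Type*} [Fintype a] [Fintype b] (A : Matrix a b ℝ) (v : b → ℝ) :
    ‖A *ᵥ v‖ ≤ (∑ i, ∑ j, |A i j|) * ‖v‖ := by
  have hnn : (0:ℝ) ≤ (∑ i, ∑ j, |A i j|) * ‖v‖ := by positivity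
  rw [pi_norm_le_iff_of_nonneg hnn]
  intro i
  have h1 : ‖(A *ᵥ v) i‖ = |∑ j, A i j * v j| := by
    simp [Matrix.mulVec, dotProduct, Real.norm_eq_abs]
  rw [h1]
  calc |∑ j, A i j * v j| ≤ ∑ j, |A i j * v j| := Finset.abs_sum_le_sum_abs _ _
    _ ≤ ∑ j, |A i j| * ‖v‖ := by
        refine Finset.sum_le_sum (fun j _ => ?_)
        rw [abs_mul]
        exact mul_le_mul_of_nonneg_left (by simpa [Real.norm_eq_abs] using norm_le_pi_norm v j) (abs_nonneg _)
    _ = (∑ j, |A i j|) * ‖v‖ := by rw [Finset.sum_mul]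
    _ ≤ (∑ i', ∑ j, |A i' j|) * ‖v‖ := by
        refine mul_le_mul_of_nonneg_right ?_ (norm_nonneg _)
        exact Finset.single_le_sum (f := fun i' => ∑ j, |A i' j|)
          (fun i' _ => Finset.sum_nonneg (fun j _ => abs_nonneg _)) (Finset.mem_univ i)

section BioCCPC

variable (m : ℕ) (d kk : ℕ → ℕ)
  (Wb Wa : (l : ℕ) → Matrix (Fin (d (l + 1))) (Fin (d l)) ℝ)
  (Q : (l : ℕ) → Matrix (Fin (kk l)) (Fin (d l)) ℝ)
  (chain : (j : ℕ) → Matrix (Fin (d j)) (Fin (d (m + 1))) ℝ)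

/-- The pair `(G_l, H_l)` of matrix-valued functions of `ε` such that
`z_{l+1} = G_l(ε) z_l + ε^{m-l} H_l(ε) y` at equilibrium. -/
noncomputable def GH (l : ℕ) :
    (ℝ → Matrix (Fin (d (l+1))) (Fin (d l)) ℝ) × (ℝ → Matrix (Fin (d (l+1))) (Fin (d (m+1))) ℝ) :=
  if _ : l < m then
    (fun ε => ((1 : Matrix (Fin (d (l+1))) (Fin (d (l+1))) ℝ)
        + ε • ((Q (l+1))ᵀ * Q (l+1)) - ε • ((Wa (l+1))ᵀ * (GH (l+1)).1 ε))⁻¹ * Wb l,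
     fun ε => ((1 : Matrix (Fin (d (l+1))) (Fin (d (l+1))) ℝ)
        + ε • ((Q (l+1))ᵀ * Q (l+1)) - ε • ((Wa (l+1))ᵀ * (GH (l+1)).1 ε))⁻¹
        * ((Wa (l+1))ᵀ * (GH (l+1)).2 ε))
  else (0, fun _ => chain (l+1))
termination_by m - l
decreasing_by all_goals omega

/-- The matrix `M_l(ε)` appearing in the recursion. -/
noncomputable def Mmat (l : ℕ) (ε : ℝ) : Matrix (Fin (d (l+1))) (Fin (d (l+1))) ℝ :=
  (1 : Matrix (Fin (d (l+1))) (Fin (d (l+1))) ℝ)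
    + ε • ((Q (l+1))ᵀ * Q (l+1)) - ε • ((Wa (l+1))ᵀ * (GH m d kk Wb Wa Q chain (l+1)).1 ε)

lemma GH_lt {l : ℕ} (h : l < m) :
    GH m d kk Wb Wa Q chain l =
      (fun ε => (Mmat m d kk Wb Wa Q chain l ε)⁻¹ * Wb l,
       fun ε => (Mmat m d kk Wb Wa Q chain l ε)⁻¹
         * ((Wa (l+1))ᵀ * (GH m d kk Wb Wa Q chain (l+1)).2 ε)) := by
  rw [GH]
  simp [h, Mmat]

lemma GH_ge {l : ℕ} (h : ¬ l < m) :
    GH m d kk Wb Wa Q chain l = (0, fun _ => chain (l+1)) := by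
  rw [GH]; simp [h]

/-- The candidate equilibrium solution, defined by forward recursion. -/
noncomputable def zs (ε : ℝ) (x : Fin (d 0) → ℝ) (y : Fin (d (m+1)) → ℝ) :
    (l : ℕ) → Fin (d l) → ℝ
  | 0 => x
  | (l+1) => (GH m d kk Wb Wa Q chain l).1 ε *ᵥ zs ε x y l
      + ε ^ (m - l) • ((GH m d kk Wb Wa Q chain l).2 ε *ᵥ y)

lemma Mmat_zero (l : ℕ) : Mmat m d kk Wb Wa Q chain l 0 = 1 := by
  simp [Mmat]

lemma GH_analytic : ∀ (k l : ℕ), m ≤ l + k →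
    (∀ i j, AnalyticAt ℝ (fun ε => (GH m d kk Wb Wa Q chain l).1 ε i j) 0) ∧
    (∀ i j, AnalyticAt ℝ (fun ε => (GH m d kk Wb Wa Q chain l).2 ε i j) 0) := by
  intro k
  induction k with
  | zero =>
    intro l hl
    rw [GH_ge m d kk Wb Wa Q chain (by omega)]
    exact ⟨fun i j => by simpa using analyticAt_const, fun i j => analyticAt_const⟩
  | succ k ih =>
    intro l hl
    by_cases h : l < m
    · have IH := ih (l+1) (by omega)
      have hM : ∀ i j, AnalyticAt ℝ (fun ε => Mmat m d kk Wb Wa Q chain l ε i j) 0 := by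
        intro i j
        have h1 : AnalyticAt ℝ (fun ε : ℝ =>
            ((Wa (l+1))ᵀ * (GH m d kk Wb Wa Q chain (l+1)).1 ε) i j) 0 := by
          simp only [Matrix.mul_apply]
          exact Finset.analyticAt_fun_sum _ (fun t _ => analyticAt_const.mul (IH.1 t j))
        have : (fun ε => Mmat m d kk Wb Wa Q chain l ε i j)
            = fun ε => (1 : Matrix (Fin (d (l+1))) (Fin (d (l+1))) ℝ) i j
              + ε * ((Q (l+1))ᵀ * Q (l+1)) i j
              - ε * ((Wa (l+1))ᵀ * (GH m d kk Wb Wa Q chain (l+1)).1 ε) i j := by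
          funext ε
          simp [Mmat, Matrix.sub_apply, Matrix.add_apply, Matrix.smul_apply]
        rw [this]
        exact ((analyticAt_const.add (analyticAt_id.mul analyticAt_const)).sub
          (analyticAt_id.mul h1))
      have hdet0 : (Mmat m d kk Wb Wa Q chain l 0).det ≠ 0 := by
        rw [Mmat_zero]; simp
      have hMfun : ∀ i j, AnalyticAt ℝ (fun ε => (Mmat m d kk Wb Wa Q chain l ε)⁻¹ i j) 0 :=
        analyticAt_inv_entry hM (by simpa using hdet0)
      rw [GH_lt m d kk Wb Wa Q chain h]
      constructor
      · intro i j
        simp only [Matrix.mul_apply]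
        exact Finset.analyticAt_fun_sum _ (fun t _ => (hMfun i t).mul analyticAt_const)
      · intro i j
        simp only [Matrix.mul_apply]
        refine Finset.analyticAt_fun_sum _ (fun t _ => (hMfun i t).mul ?_)
        exact Finset.analyticAt_fun_sum _ (fun s _ => analyticAt_const.mul (IH.2 s j))
    · rw [GH_ge m d kk Wb Wa Q chain h]
      exact ⟨fun i j => by simpa using analyticAt_const, fun i j => analyticAt_const⟩

lemma GH_spec {l : ℕ} (h : l < m) {ε : ℝ}
    (hdet : IsUnit (Mmat m d kk Wb Wa Q chain l ε).det) :
    Mmat m d kk Wb Wa Q chain l ε * (GH m d kk Wb Wa Q chain l).1 ε = Wb l ∧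
    Mmat m d kk Wb Wa Q chain l ε * (GH m d kk Wb Wa Q chain l).2 ε
      = (Wa (l+1))ᵀ * (GH m d kk Wb Wa Q chain (l+1)).2 ε := by
  rw [GH_lt m d kk Wb Wa Q chain h]
  constructor <;>
    rw [← Matrix.mul_assoc, Matrix.mul_nonsing_inv _ hdet, Matrix.one_mul]

lemma zs_zero (ε : ℝ) (x : Fin (d 0) → ℝ) (y : Fin (d (m+1)) → ℝ) :
    zs m d kk Wb Wa Q chain ε x y 0 = x := rfl

lemma zs_succ (ε : ℝ) (x : Fin (d 0) → ℝ) (y : Fin (d (m+1)) → ℝ) (l : ℕ) :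
    zs m d kk Wb Wa Q chain ε x y (l+1)
      = (GH m d kk Wb Wa Q chain l).1 ε *ᵥ zs m d kk Wb Wa Q chain ε x y l
        + ε ^ (m - l) • ((GH m d kk Wb Wa Q chain l).2 ε *ᵥ y) := rfl

lemma zs_top (hchainTop : chain (m+1) = 1) (ε : ℝ) (x : Fin (d 0) → ℝ)
    (y : Fin (d (m+1)) → ℝ) : zs m d kk Wb Wa Q chain ε x y (m+1) = y := by
  rw [zs_succ, GH_ge m d kk Wb Wa Q chain (lt_irrefl m), hchainTop]
  simp

lemma zs_equation {l : ℕ} (h : l < m) {ε : ℝ}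
    (hdet : IsUnit (Mmat m d kk Wb Wa Q chain l ε).det)
    (x : Fin (d 0) → ℝ) (y : Fin (d (m+1)) → ℝ) :
    Wb l *ᵥ zs m d kk Wb Wa Q chain ε x y l
      + ε • ((Wa (l + 1))ᵀ *ᵥ zs m d kk Wb Wa Q chain ε x y (l + 2))
      - zs m d kk Wb Wa Q chain ε x y (l + 1)
      - ε • ((Q (l + 1))ᵀ *ᵥ (Q (l + 1) *ᵥ zs m d kk Wb Wa Q chain ε x y (l + 1))) = 0 := by
  obtain ⟨hf1, hf2⟩ := GH_spec m d kk Wb Wa Q chain h hdet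
  set A := Mmat m d kk Wb Wa Q chain l ε with hA
  set G1 := (GH m d kk Wb Wa Q chain l).1 ε
  set H1 := (GH m d kk Wb Wa Q chain l).2 ε
  set G2 := (GH m d kk Wb Wa Q chain (l+1)).1 ε
  set H2 := (GH m d kk Wb Wa Q chain (l+1)).2 ε
  set zl := zs m d kk Wb Wa Q chain ε x y l
  set z1 := zs m d kk Wb Wa Q chain ε x y (l+1) with hz1def
  have hml : m - l = (m - (l+1)) + 1 := by omega
  have hz1 : z1 = G1 *ᵥ zl + ε ^ (m - l) • (H1 *ᵥ y) := rfl
  have hz2 : zs m d kk Wb Wa Q chain ε x y (l+2)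
      = G2 *ᵥ z1 + ε ^ (m - (l+1)) • (H2 *ᵥ y) := rfl
  have e1 : ε • ((Wa (l+1))ᵀ *ᵥ zs m d kk Wb Wa Q chain ε x y (l+2))
      = ε • (((Wa (l+1))ᵀ * G2) *ᵥ z1) + ε ^ (m - l) • (((Wa (l+1))ᵀ * H2) *ᵥ y) := by
    rw [hz2, Matrix.mulVec_add, Matrix.mulVec_smul, Matrix.mulVec_mulVec,
      Matrix.mulVec_mulVec, smul_add, smul_smul, ← pow_succ', ← hml]
  have e2 : z1 + ε • ((Q (l+1))ᵀ *ᵥ (Q (l+1) *ᵥ z1))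
      = A *ᵥ z1 + ε • (((Wa (l+1))ᵀ * G2) *ᵥ z1) := by
    rw [hA, Mmat, Matrix.sub_mulVec, Matrix.add_mulVec, Matrix.one_mulVec,
      Matrix.smul_mulVec, Matrix.smul_mulVec, ← Matrix.mulVec_mulVec]
    abel
  have e3 : A *ᵥ z1 = Wb l *ᵥ zl + ε ^ (m - l) • (((Wa (l+1))ᵀ * H2) *ᵥ y) := by
    rw [hz1, Matrix.mulVec_add, Matrix.mulVec_smul, Matrix.mulVec_mulVec,
      Matrix.mulVec_mulVec, hf1, hf2]
  have e2' : ε • ((Q (l+1))ᵀ *ᵥ (Q (l+1) *ᵥ z1))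
      = A *ᵥ z1 + ε • (((Wa (l+1))ᵀ * G2) *ᵥ z1) - z1 := by
    rw [← e2]; abel
  rw [e1, e2', e3]
  abel

lemma GH2_zero (hchain : ∀ j, j ≤ m → chain j = (Wa j)ᵀ * chain (j+1)) :
    ∀ (k l : ℕ), m ≤ l + k → (GH m d kk Wb Wa Q chain l).2 0 = chain (l+1) := by
  intro k
  induction k with
  | zero =>
    intro l hl
    rw [GH_ge m d kk Wb Wa Q chain (by omega)]
  | succ k ih =>
    intro l hl
    by_cases h : l < m
    · rw [GH_lt m d kk Wb Wa Q chain h]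
      show (Mmat m d kk Wb Wa Q chain l 0)⁻¹
          * ((Wa (l+1))ᵀ * (GH m d kk Wb Wa Q chain (l+1)).2 0) = _
      rw [Mmat_zero, inv_one, Matrix.one_mul, ih (l+1) (by omega),
        ← hchain (l+1) (by omega)]
    · rw [GH_ge m d kk Wb Wa Q chain h]

lemma Mmat_analytic (l : ℕ) (i j : Fin (d (l+1))) :
    AnalyticAt ℝ (fun ε => Mmat m d kk Wb Wa Q chain l ε i j) 0 := by
  have IH := GH_analytic m d kk Wb Wa Q chain m (l+1) (by omega)
  have h1 : AnalyticAt ℝ (fun ε : ℝ =>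
      ((Wa (l+1))ᵀ * (GH m d kk Wb Wa Q chain (l+1)).1 ε) i j) 0 := by
    simp only [Matrix.mul_apply]
    exact Finset.analyticAt_fun_sum _ (fun t _ => analyticAt_const.mul (IH.1 t j))
  have h2 : (fun ε => Mmat m d kk Wb Wa Q chain l ε i j)
      = fun ε => (1 : Matrix (Fin (d (l+1))) (Fin (d (l+1))) ℝ) i j
        + ε * ((Q (l+1))ᵀ * Q (l+1)) i j
        - ε * ((Wa (l+1))ᵀ * (GH m d kk Wb Wa Q chain (l+1)).1 ε) i j := by
    funext ε
    simp [Mmat, Matrix.sub_apply, Matrix.add_apply, Matrix.smul_apply]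
  rw [h2]
  exact (analyticAt_const.add (analyticAt_id.mul analyticAt_const)).sub
    (analyticAt_id.mul h1)

lemma zs_analytic (x : Fin (d 0) → ℝ) (y : Fin (d (m+1)) → ℝ) :
    ∀ (l : ℕ) (i : Fin (d l)),
      AnalyticAt ℝ (fun ε => zs m d kk Wb Wa Q chain ε x y l i) 0 := by
  intro l
  induction l with
  | zero => intro i; exact analyticAt_const
  | succ l ih =>
    intro i
    have hG := (GH_analytic m d kk Wb Wa Q chain m l (by omega)).1
    have hH := (GH_analytic m d kk Wb Wa Q chain m l (by omega)).2
    have h2 : (fun ε => zs m d kk Wb Wa Q chain ε x y (l+1) i)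
        = fun ε => (∑ j, (GH m d kk Wb Wa Q chain l).1 ε i j
              * zs m d kk Wb Wa Q chain ε x y l j)
            + ε ^ (m - l) * (∑ j, (GH m d kk Wb Wa Q chain l).2 ε i j * y j) := by
      funext ε
      rw [zs_succ]
      simp [Matrix.mulVec, dotProduct]
    rw [h2]
    refine (Finset.analyticAt_fun_sum _ (fun j _ => (hG i j).mul (ih j))).add ?_
    exact ((analyticAt_id.pow _)).mul
      (Finset.analyticAt_fun_sum _ (fun j _ => (hH i j).mul analyticAt_const))

lemma entry_sum_bound {a b : Type*} [Fintype a] [Fintype b] {A : ℝ → Matrix a b ℝ}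
    (h : ∀ i j, AnalyticAt ℝ (fun ε => A ε i j) 0) :
    ∃ B : ℝ, 0 ≤ B ∧ ∀ᶠ ε in nhds (0:ℝ), ∀ v : b → ℝ, ‖A ε *ᵥ v‖ ≤ B * ‖v‖ := by
  set S : ℝ → ℝ := fun ε => ∑ i, ∑ j, |A ε i j| with hS
  have hS0 : 0 ≤ S 0 := Finset.sum_nonneg fun i _ => Finset.sum_nonneg fun j _ => abs_nonneg _
  have hcont : Filter.Tendsto S (nhds 0) (nhds (S 0)) := by
    apply tendsto_finset_sum
    intro i _
    apply tendsto_finset_sum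
    intro j _
    exact ((h i j).continuousAt.tendsto).abs
  refine ⟨S 0 + 1, by linarith, ?_⟩
  filter_upwards [hcont.eventually_lt_const (lt_add_one (S 0))] with ε hε v
  exact (norm_mulVec_le' _ v).trans (mul_le_mul_of_nonneg_right hε.le (norm_nonneg v))

lemma zs_norm_bound : ∀ l : ℕ, ∃ C : ℝ, 0 ≤ C ∧ ∀ᶠ ε in nhds (0:ℝ),
    ∀ (x : Fin (d 0) → ℝ) (y : Fin (d (m+1)) → ℝ),
      ‖zs m d kk Wb Wa Q chain ε x y l‖ ≤ C * (‖x‖ + ‖y‖) := by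
  intro l
  induction l with
  | zero =>
    refine ⟨1, zero_le_one, Filter.Eventually.of_forall fun ε x y => ?_⟩
    rw [zs_zero]
    nlinarith [norm_nonneg x, norm_nonneg y]
  | succ l ih =>
    obtain ⟨C, hC0, hC⟩ := ih
    obtain ⟨BG, hBG0, hBG⟩ := entry_sum_bound
      (h := (GH_analytic m d kk Wb Wa Q chain m l (by omega)).1)
    obtain ⟨BH, hBH0, hBH⟩ := entry_sum_bound
      (h := (GH_analytic m d kk Wb Wa Q chain m l (by omega)).2)
    refine ⟨BG * C + BH, by positivity, ?_⟩
    have hsmall : ∀ᶠ ε in nhds (0:ℝ), |ε| ≤ 1 := by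
      filter_upwards [eventually_abs_sub_lt (0:ℝ) zero_lt_one] with ε hε
      simpa using hε.le
    filter_upwards [hC, hBG, hBH, hsmall] with ε hC' hBG' hBH' hε x y
    rw [zs_succ]
    have hb1 : ‖(GH m d kk Wb Wa Q chain l).1 ε *ᵥ zs m d kk Wb Wa Q chain ε x y l‖
        ≤ BG * (C * (‖x‖ + ‖y‖)) := by
      refine (hBG' _).trans (mul_le_mul_of_nonneg_left (hC' x y) hBG0)
    have hb2 : ‖ε ^ (m - l) • ((GH m d kk Wb Wa Q chain l).2 ε *ᵥ y)‖ ≤ BH * ‖y‖ := by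
      rw [norm_smul]
      have h1 : ‖ε ^ (m - l)‖ ≤ 1 := by
        rw [Real.norm_eq_abs, abs_pow]
        exact pow_le_one₀ (abs_nonneg _) hε
      calc ‖ε ^ (m - l)‖ * ‖(GH m d kk Wb Wa Q chain l).2 ε *ᵥ y‖
          ≤ 1 * ‖(GH m d kk Wb Wa Q chain l).2 ε *ᵥ y‖ :=
            mul_le_mul_of_nonneg_right h1 (norm_nonneg _)
        _ = ‖(GH m d kk Wb Wa Q chain l).2 ε *ᵥ y‖ := one_mul _
        _ ≤ BH * ‖y‖ := hBH' y
    calc ‖(GH m d kk Wb Wa Q chain l).1 ε *ᵥ zs m d kk Wb Wa Q chain ε x y l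
          + ε ^ (m - l) • ((GH m d kk Wb Wa Q chain l).2 ε *ᵥ y)‖
        ≤ ‖(GH m d kk Wb Wa Q chain l).1 ε *ᵥ zs m d kk Wb Wa Q chain ε x y l‖
          + ‖ε ^ (m - l) • ((GH m d kk Wb Wa Q chain l).2 ε *ᵥ y)‖ := norm_add_le _ _
      _ ≤ BG * (C * (‖x‖ + ‖y‖)) + BH * ‖y‖ := add_le_add hb1 hb2
      _ ≤ (BG * C + BH) * (‖x‖ + ‖y‖) := by nlinarith [norm_nonneg x, norm_nonneg y]

lemma det_isUnit_eventually : ∀ᶠ ε in nhds (0:ℝ),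
    ∀ l < m, IsUnit ((Mmat m d kk Wb Wa Q chain l ε).det) := by
  have h : ∀ l, ∀ᶠ ε in nhds (0:ℝ), IsUnit ((Mmat m d kk Wb Wa Q chain l ε).det) := by
    intro l
    have hdet : AnalyticAt ℝ (fun ε => (Mmat m d kk Wb Wa Q chain l ε).det) 0 :=
      analyticAt_det' (Mmat_analytic m d kk Wb Wa Q chain l)
    have h0 : (Mmat m d kk Wb Wa Q chain l 0).det ≠ 0 := by rw [Mmat_zero]; simp
    filter_upwards [hdet.continuousAt.eventually_ne h0] with ε hε
    exact isUnit_iff_ne_zero.mpr hε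
  have h2 : ∀ᶠ ε in nhds (0:ℝ), ∀ l ∈ Finset.range m,
      IsUnit ((Mmat m d kk Wb Wa Q chain l ε).det) :=
    (Filter.eventually_all_finset _).mpr fun l _ => h l
  filter_upwards [h2] with ε hε l hl
  exact hε l (Finset.mem_range.mpr hl)

lemma sum_abs_diff_bound {a b : Type*} [Fintype a] [Fintype b]
    (A B : Matrix a b ℝ) (c : a → b → ℝ) (t : ℝ)
    (h : ∀ i j, |A i j - B i j| ≤ c i j * t) :
    ∑ i, ∑ j, |(A - B) i j| ≤ (∑ i, ∑ j, c i j) * t := by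
  rw [Finset.sum_mul]
  refine Finset.sum_le_sum fun i _ => ?_
  rw [Finset.sum_mul]
  refine Finset.sum_le_sum fun j _ => ?_
  simpa [Matrix.sub_apply] using h i j

end BioCCPC


/-- **Analyticity and leading-order expansion of the BioCCPC equilibrium near ε = 0.**
For the `(n+1)`-layer linear BioCCPC network (`n = m + 1`) with fixed weights, the
equilibrium solution `z(ε)` (with clamped input `x` and output `y`) is well-defined and
analytic in `ε` on a neighborhood of `ε = 0`, and for each hidden pair of layers there
exist matrix-valued polynomials `C₁(ε)`, `C₂(ε)` of degree at most `n − l − 1`,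
independent of `y`, such that as `ε → 0⁺`:
`z^{(l)}(ε) = C₁(ε) z^{(l-1)}(ε) + O(ε^{n-l})` and
`z^{(l+1)}(ε) = C₂(ε) z^{(l-1)}(ε) + ε^{n-l-1} W_a^{(l+1)ᵀ}⋯W_a^{(n-1)ᵀ} y + O(ε^{n-l})`,
with implicit constants depending only on the fixed matrices, `‖x‖` and `‖y‖`.
(Here the hidden layer called `l` in the informal statement is `l + 1` below.) -/
theorem bioccpc_equilibrium_analytic_expansion
    (m : ℕ) (hm : 1 ≤ m) (d kk : ℕ → ℕ)
    (Wb Wa : (l : ℕ) → Matrix (Fin (d (l + 1))) (Fin (d l)) ℝ)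
    (Q : (l : ℕ) → Matrix (Fin (kk l)) (Fin (d l)) ℝ)
    -- the chain of transposed feedback weights `chain j = W_a^{(j)ᵀ} ⋯ W_a^{(m)ᵀ}`
    (chain : (j : ℕ) → Matrix (Fin (d j)) (Fin (d (m + 1))) ℝ)
    (hchainTop : chain (m + 1) = 1)
    (hchain : ∀ j, j ≤ m → chain j = (Wa j)ᵀ * chain (j + 1)) :
    ∃ ε₀ : ℝ, 0 < ε₀ ∧
    ∃ zsol : ℝ → (Fin (d 0) → ℝ) → (Fin (d (m + 1)) → ℝ) → (l : ℕ) → Fin (d l) → ℝ,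
      -- `zsol ε x y` solves the equilibrium equations with boundary values `x`, `y`
      (∀ ε ∈ Set.Ioo (0 : ℝ) ε₀, ∀ x y,
        zsol ε x y 0 = x ∧ zsol ε x y (m + 1) = y ∧
        ∀ l, l < m →
          Wb l *ᵥ zsol ε x y l + ε • ((Wa (l + 1))ᵀ *ᵥ zsol ε x y (l + 2))
            - zsol ε x y (l + 1)
            - ε • ((Q (l + 1))ᵀ *ᵥ (Q (l + 1) *ᵥ zsol ε x y (l + 1))) = 0) ∧
      -- the equilibrium solution is analytic in `ε` on a neighborhood of `ε = 0`
      (∀ x y l i, AnalyticAt ℝ (fun ε => zsol ε x y l i) 0) ∧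
      -- the leading-order expansions
      (∀ l, l + 1 ≤ m →
        ∃ C₁ : ℝ → Matrix (Fin (d (l + 1))) (Fin (d l)) ℝ,
        ∃ C₂ : ℝ → Matrix (Fin (d (l + 2))) (Fin (d l)) ℝ,
          (∀ i j, ∃ p : Polynomial ℝ, p.natDegree ≤ m - l - 1 ∧
            ∀ ε, C₁ ε i j = p.eval ε) ∧
          (∀ i j, ∃ p : Polynomial ℝ, p.natDegree ≤ m - l - 1 ∧
            ∀ ε, C₂ ε i j = p.eval ε) ∧
          ∃ K : ℝ → ℝ → ℝ, ∃ ε₁ : ℝ, 0 < ε₁ ∧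
            ∀ x y, ∀ ε ∈ Set.Ioo (0 : ℝ) ε₁,
              ‖zsol ε x y (l + 1) - C₁ ε *ᵥ zsol ε x y l‖
                ≤ K ‖x‖ ‖y‖ * ε ^ (m - l) ∧
              ‖zsol ε x y (l + 2) - C₂ ε *ᵥ zsol ε x y l
                  - ε ^ (m - l - 1) • (chain (l + 2) *ᵥ y)‖
                ≤ K ‖x‖ ‖y‖ * ε ^ (m - l)) := by
  classical
  obtain ⟨ε₀, hε₀pos, hdet⟩ :=
    Metric.eventually_nhds_iff.mp (det_isUnit_eventually m d kk Wb Wa Q chain)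
  refine ⟨ε₀, hε₀pos, zs m d kk Wb Wa Q chain, ?_,
    fun x y l i => zs_analytic m d kk Wb Wa Q chain x y l i, ?_⟩
  · intro ε hε x y
    have hd : ∀ l < m, IsUnit ((Mmat m d kk Wb Wa Q chain l ε).det) := by
      refine hdet ?_
      rw [Real.dist_eq, sub_zero, abs_of_pos hε.1]
      exact hε.2
    exact ⟨rfl, zs_top m d kk Wb Wa Q chain hchainTop ε x y,
      fun l hl => zs_equation m d kk Wb Wa Q chain hl (hd l hl) x y⟩
  · intro l hl
    have hlm : l < m := hl
    have hml : m - l - 1 + 1 = m - l := by omega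
    have hGl := (GH_analytic m d kk Wb Wa Q chain m l (by omega)).1
    have hHl := (GH_analytic m d kk Wb Wa Q chain m l (by omega)).2
    have hGl1 := (GH_analytic m d kk Wb Wa Q chain m (l+1) (by omega)).1
    have hHl1 := (GH_analytic m d kk Wb Wa Q chain m (l+1) (by omega)).2
    have hGP : ∀ i j, AnalyticAt ℝ (fun ε =>
        ((GH m d kk Wb Wa Q chain (l+1)).1 ε * (GH m d kk Wb Wa Q chain l).1 ε) i j) 0 := by
      intro i j
      simp only [Matrix.mul_apply]
      exact Finset.analyticAt_fun_sum _ fun t _ => (hGl1 i t).mul (hGl t j)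
    choose P1 hP1deg hP1c0 C1e hC1e0 hC1e using fun i j => taylor_trunc (hGl i j) (m - l - 1)
    choose P2 hP2deg hP2c0 C2e hC2e0 hC2e using fun i j => taylor_trunc (hGP i j) (m - l - 1)
    choose P3 hP3deg hP3c0 C3e hC3e0 hC3e using fun i j => taylor_trunc (hHl1 i j) 0
    refine ⟨fun ε => Matrix.of fun i j => (P1 i j).eval ε,
      fun ε => Matrix.of fun i j => (P2 i j).eval ε,
      fun i j => ⟨P1 i j, hP1deg i j, fun ε => rfl⟩,
      fun i j => ⟨P2 i j, hP2deg i j, fun ε => rfl⟩, ?_⟩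
    obtain ⟨BH, hBH0, hBH⟩ := entry_sum_bound (h := hHl)
    obtain ⟨BG1, hBG10, hBG1⟩ := entry_sum_bound (h := hGl1)
    obtain ⟨Cz, hCz0, hCz⟩ := zs_norm_bound m d kk Wb Wa Q chain l
    set S1 : ℝ := ∑ i, ∑ j, C1e i j with hS1def
    set S2 : ℝ := ∑ i, ∑ j, C2e i j with hS2def
    set S3 : ℝ := ∑ i, ∑ j, C3e i j with hS3def
    have hS10 : 0 ≤ S1 := Finset.sum_nonneg fun i _ => Finset.sum_nonneg fun j _ => hC1e0 i j
    have hS20 : 0 ≤ S2 := Finset.sum_nonneg fun i _ => Finset.sum_nonneg fun j _ => hC2e0 i j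
    have hS30 : 0 ≤ S3 := Finset.sum_nonneg fun i _ => Finset.sum_nonneg fun j _ => hC3e0 i j
    set Ktot : ℝ := S1 * Cz + BH + (S2 * Cz + BG1 * BH + S3) with hKdef
    refine ⟨fun a b => Ktot * (a + b), ?_⟩
    have hEv1 : ∀ᶠ ε in nhds (0:ℝ), ∀ i j,
        |(GH m d kk Wb Wa Q chain l).1 ε i j - (P1 i j).eval ε|
          ≤ C1e i j * |ε| ^ (m - l - 1 + 1) :=
      Filter.eventually_all.mpr fun i => Filter.eventually_all.mpr fun j => hC1e i j
    have hEv2 : ∀ᶠ ε in nhds (0:ℝ), ∀ i j,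
        |((GH m d kk Wb Wa Q chain (l+1)).1 ε * (GH m d kk Wb Wa Q chain l).1 ε) i j
            - (P2 i j).eval ε| ≤ C2e i j * |ε| ^ (m - l - 1 + 1) :=
      Filter.eventually_all.mpr fun i => Filter.eventually_all.mpr fun j => hC2e i j
    have hEv3 : ∀ᶠ ε in nhds (0:ℝ), ∀ i j,
        |(GH m d kk Wb Wa Q chain (l+1)).2 ε i j - (P3 i j).eval ε|
          ≤ C3e i j * |ε| ^ (0 + 1) :=
      Filter.eventually_all.mpr fun i => Filter.eventually_all.mpr fun j => hC3e i j
    obtain ⟨ε₁, hε₁pos, hall⟩ := Metric.eventually_nhds_iff.mp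
      (hEv1.and (hEv2.and (hEv3.and (hBH.and (hBG1.and hCz)))))
    refine ⟨ε₁, hε₁pos, ?_⟩
    intro x y ε hε
    obtain ⟨h1, h2, h3, h4, h5, h6⟩ := hall (by
      rw [Real.dist_eq, sub_zero, abs_of_pos hε.1]; exact hε.2)
    have hεpos : (0:ℝ) < ε := hε.1
    have hεabs : |ε| = ε := abs_of_pos hεpos
    set zl := zs m d kk Wb Wa Q chain ε x y l with hzldef
    have hzlb : ‖zl‖ ≤ Cz * (‖x‖ + ‖y‖) := h6 x y
    have hxy0 : (0:ℝ) ≤ ‖x‖ + ‖y‖ := by positivity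
    have hpow0 : (0:ℝ) ≤ ε ^ (m - l) := by positivity
    have hpow0' : (0:ℝ) ≤ ε ^ (m - l - 1) := by positivity
    have hyn : ‖y‖ ≤ ‖x‖ + ‖y‖ := by nlinarith [norm_nonneg x]
    -- entrywise difference bounds summed
    have hd1 : ∑ i, ∑ j, |((GH m d kk Wb Wa Q chain l).1 ε
        - Matrix.of fun i j => (P1 i j).eval ε) i j| ≤ S1 * ε ^ (m - l) :=
      calc ∑ i, ∑ j, |((GH m d kk Wb Wa Q chain l).1 ε
          - Matrix.of fun i j => (P1 i j).eval ε) i j|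
          ≤ S1 * |ε| ^ (m - l - 1 + 1) :=
            sum_abs_diff_bound _ _ _ _ fun i j => h1 i j
        _ = S1 * ε ^ (m - l) := by rw [hεabs, hml]
    have hd2 : ∑ i, ∑ j, |((GH m d kk Wb Wa Q chain (l+1)).1 ε
          * (GH m d kk Wb Wa Q chain l).1 ε
        - Matrix.of fun i j => (P2 i j).eval ε) i j| ≤ S2 * ε ^ (m - l) :=
      calc ∑ i, ∑ j, |((GH m d kk Wb Wa Q chain (l+1)).1 ε
            * (GH m d kk Wb Wa Q chain l).1 ε
          - Matrix.of fun i j => (P2 i j).eval ε) i j|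
          ≤ S2 * |ε| ^ (m - l - 1 + 1) :=
            sum_abs_diff_bound _ _ _ _ fun i j => h2 i j
        _ = S2 * ε ^ (m - l) := by rw [hεabs, hml]
    have hP3eval : ∀ i j, (P3 i j).eval ε = (GH m d kk Wb Wa Q chain (l+1)).2 0 i j := by
      intro i j
      rw [Polynomial.eq_C_of_natDegree_le_zero (hP3deg i j), Polynomial.eval_C, hP3c0 i j]
    have hd3 : ∑ i, ∑ j, |((GH m d kk Wb Wa Q chain (l+1)).2 ε
        - (GH m d kk Wb Wa Q chain (l+1)).2 0) i j| ≤ S3 * ε :=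
      calc ∑ i, ∑ j, |((GH m d kk Wb Wa Q chain (l+1)).2 ε
          - (GH m d kk Wb Wa Q chain (l+1)).2 0) i j|
          ≤ S3 * |ε| ^ (0 + 1) := by
            refine sum_abs_diff_bound _ _ _ _ fun i j => ?_
            have h3' := h3 i j
            rw [hP3eval i j] at h3'
            exact h3'
        _ = S3 * ε := by rw [hεabs, pow_one]
    -- bound 1
    have hid1 : zs m d kk Wb Wa Q chain ε x y (l+1)
        - (Matrix.of fun i j => (P1 i j).eval ε) *ᵥ zl
        = ((GH m d kk Wb Wa Q chain l).1 ε - Matrix.of fun i j => (P1 i j).eval ε) *ᵥ zl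
          + ε ^ (m - l) • ((GH m d kk Wb Wa Q chain l).2 ε *ᵥ y) := by
      rw [zs_succ, Matrix.sub_mulVec]
      abel
    have hb1 : ‖zs m d kk Wb Wa Q chain ε x y (l+1)
        - (Matrix.of fun i j => (P1 i j).eval ε) *ᵥ zl‖
        ≤ Ktot * (‖x‖ + ‖y‖) * ε ^ (m - l) := by
      rw [hid1]
      have t1 : ‖((GH m d kk Wb Wa Q chain l).1 ε
          - Matrix.of fun i j => (P1 i j).eval ε) *ᵥ zl‖
          ≤ S1 * ε ^ (m - l) * (Cz * (‖x‖ + ‖y‖)) :=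
        (norm_mulVec_le' _ _).trans
          (mul_le_mul hd1 hzlb (norm_nonneg _) (by positivity))
      have t2 : ‖ε ^ (m - l) • ((GH m d kk Wb Wa Q chain l).2 ε *ᵥ y)‖
          ≤ ε ^ (m - l) * (BH * (‖x‖ + ‖y‖)) := by
        rw [norm_smul, Real.norm_eq_abs, abs_pow, hεabs]
        exact mul_le_mul_of_nonneg_left
          ((h4 y).trans (mul_le_mul_of_nonneg_left hyn hBH0)) hpow0
      refine (norm_add_le _ _).trans ((add_le_add t1 t2).trans ?_)
      have hKle : S1 * Cz + BH ≤ Ktot := by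
        have hrest : (0:ℝ) ≤ S2 * Cz + BG1 * BH + S3 := by positivity
        rw [hKdef]; linarith
      have heq : S1 * ε ^ (m - l) * (Cz * (‖x‖ + ‖y‖)) + ε ^ (m - l) * (BH * (‖x‖ + ‖y‖))
          = (S1 * Cz + BH) * (‖x‖ + ‖y‖) * ε ^ (m - l) := by ring
      rw [heq]
      exact mul_le_mul_of_nonneg_right
        (mul_le_mul_of_nonneg_right hKle hxy0) hpow0
    -- bound 2
    have hHl1z : (GH m d kk Wb Wa Q chain (l+1)).2 0 = chain (l+2) :=
      GH2_zero m d kk Wb Wa Q chain hchain m (l+1) (by omega)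
    have hz2 : zs m d kk Wb Wa Q chain ε x y (l+2)
        = (GH m d kk Wb Wa Q chain (l+1)).1 ε *ᵥ zs m d kk Wb Wa Q chain ε x y (l+1)
          + ε ^ (m - l - 1) • ((GH m d kk Wb Wa Q chain (l+1)).2 ε *ᵥ y) := rfl
    have hid2 : zs m d kk Wb Wa Q chain ε x y (l+2)
        - (Matrix.of fun i j => (P2 i j).eval ε) *ᵥ zl
        - ε ^ (m - l - 1) • (chain (l+2) *ᵥ y)
        = ((GH m d kk Wb Wa Q chain (l+1)).1 ε * (GH m d kk Wb Wa Q chain l).1 ε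
            - Matrix.of fun i j => (P2 i j).eval ε) *ᵥ zl
          + ε ^ (m - l) • ((GH m d kk Wb Wa Q chain (l+1)).1 ε
              *ᵥ ((GH m d kk Wb Wa Q chain l).2 ε *ᵥ y))
          + ε ^ (m - l - 1) • (((GH m d kk Wb Wa Q chain (l+1)).2 ε
              - (GH m d kk Wb Wa Q chain (l+1)).2 0) *ᵥ y) := by
      rw [← hHl1z, hz2, zs_succ, Matrix.mulVec_add, Matrix.mulVec_smul,
        Matrix.mulVec_mulVec, Matrix.sub_mulVec, Matrix.sub_mulVec, smul_sub]
      abel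
    have hb2 : ‖zs m d kk Wb Wa Q chain ε x y (l+2)
        - (Matrix.of fun i j => (P2 i j).eval ε) *ᵥ zl
        - ε ^ (m - l - 1) • (chain (l+2) *ᵥ y)‖
        ≤ Ktot * (‖x‖ + ‖y‖) * ε ^ (m - l) := by
      rw [hid2]
      have t1 : ‖((GH m d kk Wb Wa Q chain (l+1)).1 ε * (GH m d kk Wb Wa Q chain l).1 ε
          - Matrix.of fun i j => (P2 i j).eval ε) *ᵥ zl‖
          ≤ S2 * ε ^ (m - l) * (Cz * (‖x‖ + ‖y‖)) :=
        (norm_mulVec_le' _ _).trans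
          (mul_le_mul hd2 hzlb (norm_nonneg _) (by positivity))
      have t2 : ‖ε ^ (m - l) • ((GH m d kk Wb Wa Q chain (l+1)).1 ε
          *ᵥ ((GH m d kk Wb Wa Q chain l).2 ε *ᵥ y))‖
          ≤ ε ^ (m - l) * (BG1 * (BH * (‖x‖ + ‖y‖)))  := by
        rw [norm_smul, Real.norm_eq_abs, abs_pow, hεabs]
        refine mul_le_mul_of_nonneg_left ?_ hpow0
        refine (h5 _).trans (mul_le_mul_of_nonneg_left
          ((h4 y).trans (mul_le_mul_of_nonneg_left hyn hBH0)) hBG10)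
      have t3 : ‖ε ^ (m - l - 1) • (((GH m d kk Wb Wa Q chain (l+1)).2 ε
          - (GH m d kk Wb Wa Q chain (l+1)).2 0) *ᵥ y)‖
          ≤ S3 * ε ^ (m - l) * (‖x‖ + ‖y‖) := by
        rw [norm_smul, Real.norm_eq_abs, abs_pow, hεabs]
        have step : ‖(((GH m d kk Wb Wa Q chain (l+1)).2 ε
            - (GH m d kk Wb Wa Q chain (l+1)).2 0) *ᵥ y)‖ ≤ S3 * ε * (‖x‖ + ‖y‖) := by
          refine (norm_mulVec_le' _ _).trans ?_
          refine mul_le_mul hd3 hyn (norm_nonneg _) (by positivity)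
        calc ε ^ (m - l - 1) * ‖(((GH m d kk Wb Wa Q chain (l+1)).2 ε
              - (GH m d kk Wb Wa Q chain (l+1)).2 0) *ᵥ y)‖
            ≤ ε ^ (m - l - 1) * (S3 * ε * (‖x‖ + ‖y‖)) :=
              mul_le_mul_of_nonneg_left step hpow0'
          _ = S3 * (ε ^ (m - l - 1) * ε) * (‖x‖ + ‖y‖) := by ring
          _ = S3 * ε ^ (m - l) * (‖x‖ + ‖y‖) := by rw [← pow_succ, hml]
      refine (norm_add_le _ _).trans
        ((add_le_add (norm_add_le _ _) (le_refl _)).trans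
          ((add_le_add (add_le_add t1 t2) t3).trans ?_))
      have hKle : S2 * Cz + BG1 * BH + S3 ≤ Ktot := by
        have hrest : (0:ℝ) ≤ S1 * Cz + BH := by positivity
        rw [hKdef]; linarith
      have heq : S2 * ε ^ (m - l) * (Cz * (‖x‖ + ‖y‖))
          + ε ^ (m - l) * (BG1 * (BH * (‖x‖ + ‖y‖)))
          + S3 * ε ^ (m - l) * (‖x‖ + ‖y‖)
          = (S2 * Cz + BG1 * BH + S3) * (‖x‖ + ‖y‖) * ε ^ (m - l) := by ring
      rw [heq]
      exact mul_le_mul_of_nonneg_right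
        (mul_le_mul_of_nonneg_right hKle hxy0) hpow0
    exact ⟨hb1, hb2⟩
end
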